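/- arXiv:1602.08268 — 3 statements merged into one kernel-verified Lean document; each statement's English description precedes it below -/
import Mathlib

section
/- Let G be a finite set with |G| ≥ 3 and let R_1,…,R_k be pairwise disjoint irreflexive symmetric binary relations on G whose union is the set of all ordered pairs (x,y) with x ≠ y. Then there exists an event-labeled tree (T,t) representing R_1,…,R_k if and only if (i) for each i ∈ {1,…,k} the graph G_{R_i} is a cograph, and (ii) for any three pairwise distinct x, y, z ∈ G the three pairs (x,y), (x,z), (y,z) lie in at most two distinct relations among R_1,…,R_k. -/
set_option linter.unusedSectionVars false
set_option linter.unusedVariables false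
set_option maxHeartbeats 1000000


/-- `u` lies on the (unique) path from `v` to the root of the tree `T`. -/
def Anc {V : Type} (T : SimpleGraph V) (root u v : V) : Prop :=
  ∀ p : T.Walk v root, p.IsPath → u ∈ p.support

/-- `w` is the least common ancestor of `x` and `y` in the tree `T` rooted at `root`:
it is a common ancestor and every common ancestor of `x` and `y` is an ancestor of `w`. -/
def IsLCA {V : Type} (T : SimpleGraph V) (root w x y : V) : Prop :=
  Anc T root w x ∧ Anc T root w y ∧
    ∀ u, Anc T root u x → Anc T root u y → Anc T root u w

/-- `v` is a leaf of the tree `T` rooted at `root`: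
a non-root vertex of degree one. -/
def IsLeaf {V : Type} (T : SimpleGraph V) (root v : V) : Prop :=
  v ≠ root ∧ ∃! u, T.Adj v u

/-- The simple graph `G_R` of a (symmetric irreflexive) relation `R`. -/
def relGraph {G : Type} (R : G → G → Prop) : SimpleGraph G where
  Adj x y := x ≠ y ∧ (R x y ∨ R y x)
  symm := ⟨fun _ _ h => ⟨Ne.symm h.1, h.2.symm⟩⟩
  loopless := ⟨fun _ h => h.1 rfl⟩

/-- A cograph: a simple graph with no induced path on four vertices. -/
def IsCograph {V : Type} (H : SimpleGraph V) : Prop :=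
  ¬ ∃ a b c d : V, a ≠ b ∧ a ≠ c ∧ a ≠ d ∧ b ≠ c ∧ b ≠ d ∧ c ≠ d ∧
    H.Adj a b ∧ H.Adj b c ∧ H.Adj c d ∧ ¬ H.Adj a c ∧ ¬ H.Adj a d ∧ ¬ H.Adj b d

/-- The tree `T` rooted at `root` contains the rooted triple `xy|z`:
`x`, `y`, `z` are pairwise distinct leaves and the path from `x` to `y`
does not intersect the path from `z` to the root. -/
def ContainsTriple {V : Type} (T : SimpleGraph V) (root x y z : V) : Prop :=
  x ≠ y ∧ x ≠ z ∧ y ≠ z ∧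
  IsLeaf T root x ∧ IsLeaf T root y ∧ IsLeaf T root z ∧
  ∀ (p : T.Walk x y) (q : T.Walk z root), p.IsPath → q.IsPath →
    ∀ v, v ∈ p.support → v ∉ q.support

/-- The event-labeled tree `(T,t)` (with leaves `ι x`, `x : G`) represents the pairwise
disjoint relations `R 0, …, R (k-1)`: for all distinct `x y : G` and all `i`,
the label of `lca (ι x) (ι y)` equals `i` iff `(x,y) ∈ R i`. -/
def RepresentsRel {G V : Type} (k : ℕ) (R : Fin k → G → G → Prop)
    (T : SimpleGraph V) (root : V) (ι : G → V) (t : V → Fin k) : Prop :=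
  ∀ x y : G, x ≠ y → ∀ w : V, IsLCA T root w (ι x) (ι y) →
    ∀ i : Fin k, (t w = i ↔ R i x y)

/-- There exists an event-labeled tree representing the relations `R 0, …, R (k-1)`:
a rooted tree whose leaf set is exactly `G` (via the injection `ι`) together with an
event labeling `t` such that `t (lca x y) = i ↔ (x,y) ∈ R i` for all distinct `x, y`. -/
def HasEventTree (G : Type) (k : ℕ) (R : Fin k → G → G → Prop) : Prop :=
  ∃ (V : Type) (T : SimpleGraph V) (root : V) (ι : G → V) (t : V → Fin k),
    T.IsTree ∧ Function.Injective ι ∧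
    (∀ v : V, IsLeaf T root v ↔ ∃ g : G, ι g = v) ∧
    RepresentsRel k R T root ι t

/-- Condition (ii): for any three pairwise distinct elements, the three pairs among
them lie in at most two distinct relations. -/
def AtMostTwoColors {G : Type} (k : ℕ) (R : Fin k → G → G → Prop) : Prop :=
  ∀ x y z : G, x ≠ y → x ≠ z → y ≠ z →
    ∀ i j l : Fin k, R i x y → R j x z → R l y z → (i = j ∨ i = l ∨ j = l)

/-- The triple set `𝒯_{R_1,…,R_k}`: `xy|z` belongs to it iff `x,y,z` are pairwise
distinct, `(x,z)` and `(y,z)` lie in the same relation `R i` and `(x,y)` lies in a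
different relation `R j`. -/
def TripleSet {G : Type} (k : ℕ) (R : Fin k → G → G → Prop) (x y z : G) : Prop :=
  x ≠ y ∧ x ≠ z ∧ y ≠ z ∧ ∃ i j : Fin k, i ≠ j ∧ R i x z ∧ R i y z ∧ R j x y

/-- A set of rooted triples (over `G`) is consistent if there is a rooted tree
containing all of them (elements of `G` realized as distinct vertices). -/
def Consistent {G : Type} (Tr : G → G → G → Prop) : Prop :=
  ∃ (V : Type) (T : SimpleGraph V) (root : V) (ι : G → V),
    T.IsTree ∧ Function.Injective ι ∧
    ∀ x y z : G, Tr x y z → ContainsTriple T root (ι x) (ι y) (ι z)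

namespace EventTree

open SimpleGraph Walk

variable {V : Type} [DecidableEq V] {T : SimpleGraph V} {root : V}

noncomputable def thePath (hT : T.IsTree) (v root : V) : T.Walk v root :=
  (hT.existsUnique_path v root).choose

lemma thePath_isPath (hT : T.IsTree) (v : V) : (thePath hT v root).IsPath :=
  (hT.existsUnique_path v root).choose_spec.1

lemma thePath_unique (hT : T.IsTree) {v : V} (q : T.Walk v root) (hq : q.IsPath) :
    q = thePath hT v root :=
  (hT.existsUnique_path v root).choose_spec.2 q hq

lemma anc_iff (hT : T.IsTree) {u v : V} :
    Anc T root u v ↔ u ∈ (thePath hT v root).support := by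
  constructor
  · intro h; exact h _ (thePath_isPath hT v)
  · intro h q hq; rw [thePath_unique hT q hq]; exact h

lemma anc_refl (hT : T.IsTree) (v : V) : Anc T root v v :=
  fun p _ => p.start_mem_support

lemma anc_root (hT : T.IsTree) (v : V) : Anc T root root v :=
  fun p _ => p.end_mem_support

/-- The path from an ancestor to the root is the corresponding suffix. -/
lemma thePath_dropUntil (hT : T.IsTree) {u v : V}
    (h : u ∈ (thePath hT v root).support) :
    (thePath hT v root).dropUntil u h = thePath hT u root :=
  thePath_unique hT _ ((thePath_isPath hT v).dropUntil h)

lemma anc_trans (hT : T.IsTree) {u v w : V}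
    (h1 : Anc T root u v) (h2 : Anc T root v w) : Anc T root u w := by
  rw [anc_iff hT] at h1 h2 ⊢
  rw [← thePath_dropUntil hT h2] at h1
  exact support_dropUntil_subset _ h2 h1

lemma anc_antisymm (hT : T.IsTree) {u v : V}
    (h1 : Anc T root u v) (h2 : Anc T root v u) : u = v := by
  rw [anc_iff hT] at h1 h2
  rw [← thePath_dropUntil hT h1] at h2
  set p := thePath hT v root with hp
  rw [support_eq_cons] at h2
  rcases List.mem_cons.mp h2 with h | h
  · exact h.symm
  · exfalso
    have hnd : p.support.Nodup := (thePath_isPath hT v).support_nodup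
    rw [← take_spec p h1, support_append] at hnd
    have hdis := List.disjoint_of_nodup_append hnd
    exact hdis (p.takeUntil u h1).start_mem_support h

lemma anc_comparable (hT : T.IsTree) {u u' v : V}
    (h1 : Anc T root u v) (h2 : Anc T root u' v) :
    Anc T root u u' ∨ Anc T root u' u := by
  rw [anc_iff hT] at h1 h2
  set p := thePath hT v root with hp
  by_cases hc : u' ∈ (p.dropUntil u h1).support
  · right
    rw [anc_iff hT, ← thePath_dropUntil hT h1]
    exact hc
  · left
    have h2' : u' ∈ (p.takeUntil u h1).support := by
      rcases (mem_support_append_iff _ _).mp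
        (by rw [take_spec p h1]; exact h2) with h | h
      · exact h
      · exact absurd h hc
    set q := ((p.takeUntil u h1).dropUntil u' h2').append (p.dropUntil u h1) with hq
    have hqp : q.IsPath := by
      have : (((p.takeUntil u h1).takeUntil u' h2').append q).IsPath := by
        rw [hq, append_assoc, take_spec, take_spec]
        exact thePath_isPath hT v
      exact this.of_append_right
    rw [anc_iff hT, ← thePath_unique hT q hqp]
    exact (mem_support_append_iff _ _).mpr (Or.inl (end_mem_support _))

lemma exists_min_anc (hT : T.IsTree) {P : V → Prop}
    (l : List V) (hl : ∀ u ∈ l, P u) (hne : l ≠ [])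
    (hcomp : ∀ u ∈ l, ∀ u' ∈ l, Anc T root u u' ∨ Anc T root u' u) :
    ∃ m ∈ l, ∀ u ∈ l, Anc T root u m := by
  induction l with
  | nil => exact absurd rfl hne
  | cons a l ih =>
    rcases eq_or_ne l [] with rfl | hlne
    · exact ⟨a, by simp, by simpa using anc_refl hT a⟩
    · obtain ⟨m, hm, hmin⟩ := ih (fun u hu => hl u (List.mem_cons_of_mem a hu)) hlne
        (fun u hu u' hu' => hcomp u (List.mem_cons_of_mem a hu) u' (List.mem_cons_of_mem a hu'))
      rcases hcomp a List.mem_cons_self m (List.mem_cons_of_mem a hm) with h | h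
      · refine ⟨m, List.mem_cons_of_mem a hm, fun u hu => ?_⟩
        rcases List.mem_cons.mp hu with rfl | hu
        · exact h
        · exact hmin u hu
      · refine ⟨a, List.mem_cons_self, fun u hu => ?_⟩
        rcases List.mem_cons.mp hu with rfl | hu
        · exact anc_refl hT u
        · exact anc_trans hT (hmin u hu) h

lemma lca_exists (hT : T.IsTree) (x y : V) : ∃ w, IsLCA T root w x y := by
  classical
  set l := (thePath hT x root).support.filter
    (fun u => decide (Anc T root u x ∧ Anc T root u y)) with hl
  have hne : l ≠ [] := by
    have : root ∈ l := by
      rw [hl, List.mem_filter]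
      refine ⟨end_mem_support _, by simp [anc_root hT]⟩
    intro h; rw [h] at this; simp at this
  have hmem : ∀ u, u ∈ l ↔ (Anc T root u x ∧ Anc T root u y) := by
    intro u
    rw [hl, List.mem_filter]
    constructor
    · intro ⟨_, h⟩; simpa using h
    · intro h; exact ⟨(anc_iff hT).mp h.1, by simpa using h⟩
  obtain ⟨m, hm, hmin⟩ := exists_min_anc hT (P := fun u => Anc T root u x ∧ Anc T root u y)
    l (fun u hu => (hmem u).mp hu) hne
    (fun u hu u' hu' => anc_comparable hT ((hmem u).mp hu).1 ((hmem u').mp hu').1)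
  obtain ⟨hmx, hmy⟩ := (hmem m).mp hm
  exact ⟨m, hmx, hmy, fun u hux huy => hmin u ((hmem u).mpr ⟨hux, huy⟩)⟩

/-- Triple lemma: among the three pairwise lcas of x, y, z, two coincide and are a
common ancestor of the third. -/
lemma lca_triple (hT : T.IsTree) {x y z w1 w2 w3 : V}
    (h1 : IsLCA T root w1 x y) (h2 : IsLCA T root w2 x z) (h3 : IsLCA T root w3 y z) :
    (w1 = w2 ∧ Anc T root w1 w3) ∨ (w1 = w3 ∧ Anc T root w1 w2) ∨
      (w2 = w3 ∧ Anc T root w2 w1) := by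
  obtain ⟨h1x, h1y, h1m⟩ := h1
  obtain ⟨h2x, h2z, h2m⟩ := h2
  obtain ⟨h3y, h3z, h3m⟩ := h3
  rcases anc_comparable hT h1x h2x with h | h
  · -- w1 anc of w2
    have h1z : Anc T root w1 z := anc_trans hT h h2z
    have h13 : Anc T root w1 w3 := h3m _ h1y h1z
    rcases anc_comparable hT h2z h3z with h' | h'
    · -- w2 anc of w3
      have h2y : Anc T root w2 y := anc_trans hT h' h3y
      have h21 : Anc T root w2 w1 := h1m _ h2x h2y
      exact Or.inl ⟨anc_antisymm hT h h21, h13⟩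
    · -- w3 anc of w2
      have h3x : Anc T root w3 x := anc_trans hT h' h2x
      have h31 : Anc T root w3 w1 := h1m _ h3x h3y
      exact Or.inr (Or.inl ⟨anc_antisymm hT h13 h31, h⟩)
  · -- w2 anc of w1
    have h2y : Anc T root w2 y := anc_trans hT h h1y
    have h23 : Anc T root w2 w3 := h3m _ h2y h2z
    rcases anc_comparable hT h1y h3y with h' | h'
    · have h1z : Anc T root w1 z := anc_trans hT h' h3z
      have h12 : Anc T root w1 w2 := h2m _ h1x h1z
      exact Or.inl ⟨anc_antisymm hT h12 h, h3m _ h1y h1z⟩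
    · have h3x : Anc T root w3 x := anc_trans hT h' h1x
      have h32 : Anc T root w3 w2 := h2m _ h3x h3z
      exact Or.inr (Or.inr ⟨anc_antisymm hT h23 h32, h⟩)


lemma forward {G : Type} {k : ℕ} {R : Fin k → G → G → Prop}
    (hsym : ∀ i x y, R i x y → R i y x) (h : HasEventTree G k R) :
    (∀ i, IsCograph (relGraph (R i))) ∧ AtMostTwoColors k R := by
  classical
  obtain ⟨V, T, root, ι, t, hT, hι, hleaf, hrep⟩ := h
  have getR : ∀ (x y : G), x ≠ y → ∀ w, IsLCA T root w (ι x) (ι y) → R (t w) x y :=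
    fun x y hxy w hw => (hrep x y hxy w hw (t w)).mp rfl
  constructor
  · intro i hP4
    obtain ⟨a, b, c, d, hab, hac, had, hbc, hbd, hcd, Aab, Abc, Acd, nac, nad, nbd⟩ := hP4
    obtain ⟨wab, hwab⟩ := lca_exists hT (root := root) (ι a) (ι b)
    obtain ⟨wac, hwac⟩ := lca_exists hT (root := root) (ι a) (ι c)
    obtain ⟨wad, hwad⟩ := lca_exists hT (root := root) (ι a) (ι d)
    obtain ⟨wbc, hwbc⟩ := lca_exists hT (root := root) (ι b) (ι c)
    obtain ⟨wbd, hwbd⟩ := lca_exists hT (root := root) (ι b) (ι d)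
    obtain ⟨wcd, hwcd⟩ := lca_exists hT (root := root) (ι c) (ι d)
    have Rab : R i a b := by rcases Aab.2 with h' | h'; exact h'; exact hsym _ _ _ h'
    have Rbc : R i b c := by rcases Abc.2 with h' | h'; exact h'; exact hsym _ _ _ h'
    have Rcd : R i c d := by rcases Acd.2 with h' | h'; exact h'; exact hsym _ _ _ h'
    have tab : t wab = i := (hrep a b hab wab hwab i).mpr Rab
    have tbc : t wbc = i := (hrep b c hbc wbc hwbc i).mpr Rbc
    have tcd : t wcd = i := (hrep c d hcd wcd hwcd i).mpr Rcd
    have tac : t wac ≠ i := fun hti => nac ⟨hac, Or.inl (hti ▸ getR a c hac wac hwac)⟩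
    have tad : t wad ≠ i := fun hti => nad ⟨had, Or.inl (hti ▸ getR a d had wad hwad)⟩
    have tbd : t wbd ≠ i := fun hti => nbd ⟨hbd, Or.inl (hti ▸ getR b d hbd wbd hwbd)⟩
    -- triple on a b c : wab = wbc and Anc wab wac
    have T1 := lca_triple hT hwab hwac hwbc
    have e1 : wab = wbc ∧ Anc T root wab wac := by
      rcases T1 with ⟨e, _⟩ | ⟨e, ha⟩ | ⟨e, _⟩
      · exact absurd (e ▸ tab) tac
      · exact ⟨e, ha⟩
      · exact absurd (e.symm ▸ tbc) tac
    -- triple on b c d : wbc = wcd and Anc wbc wbd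
    have T2 := lca_triple hT hwbc hwbd hwcd
    have e2 : wbc = wcd ∧ Anc T root wbc wbd := by
      rcases T2 with ⟨e, _⟩ | ⟨e, ha⟩ | ⟨e, _⟩
      · exact absurd (e ▸ tbc) tbd
      · exact ⟨e, ha⟩
      · exact absurd (e.symm ▸ tcd) tbd
    -- triple on a b d : wad = wbd and Anc wad wab
    have T3 := lca_triple hT hwab hwad hwbd
    have e3 : wad = wbd ∧ Anc T root wad wab := by
      rcases T3 with ⟨e, _⟩ | ⟨e, _⟩ | ⟨e, ha⟩
      · exact absurd (e ▸ tab) tad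
      · exact absurd (e ▸ tab) tbd
      · exact ⟨e, ha⟩
    have hanc1 : Anc T root wbc wbd := e2.2
    have hanc2 : Anc T root wbd wbc := by
      have h' := e3.2  -- Anc wad wab
      rw [e3.1] at h'
      rw [e1.1] at h'
      exact h'
    have : wbd = wbc := anc_antisymm hT hanc2 hanc1
    exact tbd (this ▸ tbc)
  · intro x y z hxy hxz hyz i j l Rxy Rxz Ryz
    obtain ⟨w1, hw1⟩ := lca_exists hT (root := root) (ι x) (ι y)
    obtain ⟨w2, hw2⟩ := lca_exists hT (root := root) (ι x) (ι z)
    obtain ⟨w3, hw3⟩ := lca_exists hT (root := root) (ι y) (ι z)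
    have t1 : t w1 = i := (hrep x y hxy w1 hw1 i).mpr Rxy
    have t2 : t w2 = j := (hrep x z hxz w2 hw2 j).mpr Rxz
    have t3 : t w3 = l := (hrep y z hyz w3 hw3 l).mpr Ryz
    rcases lca_triple hT hw1 hw2 hw3 with ⟨e, _⟩ | ⟨e, _⟩ | ⟨e, _⟩
    · exact Or.inl (t1 ▸ t2 ▸ congrArg t e)
    · exact Or.inr (Or.inl (t1 ▸ t3 ▸ congrArg t e))
    · exact Or.inr (Or.inr (t2 ▸ t3 ▸ congrArg t e))


section Split
variable {G : Type} [DecidableEq G] {k : ℕ} {R : Fin k → G → G → Prop}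

lemma split_lemma
    (hsym : ∀ i x y, R i x y → R i y x)
    (hdisj : ∀ i j x y, R i x y → R j x y → i = j)
    (hcover : ∀ x y : G, x ≠ y → ∃ i, R i x y)
    (hcog : ∀ i, IsCograph (relGraph (R i)))
    (h2col : AtMostTwoColors k R) :
    ∀ (n : ℕ) (s : Finset G), s.card ≤ n → 2 ≤ s.card →
      ∃ (a : Finset G) (i : Fin k), a ⊆ s ∧ a.Nonempty ∧ (s \ a).Nonempty ∧
        ∀ x ∈ a, ∀ y ∈ s \ a, R i x y := by
  classical
  intro n
  induction n with
  | zero => intro s hs h2; omega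
  | succ n IH =>
    intro s hsn h2
    rcases eq_or_lt_of_le h2 with h2' | h3
    · -- card = 2
      obtain ⟨x, y, hxy, rfl⟩ := Finset.card_eq_two.mp h2'.symm
      obtain ⟨i, hi⟩ := hcover x y hxy
      refine ⟨{x}, i, by simp, ⟨x, by simp⟩, ⟨y, ?_⟩, ?_⟩
      · simp [Finset.mem_sdiff, hxy.symm]
      · intro x' hx' y' hy'
        simp only [Finset.mem_singleton] at hx'
        subst hx'
        simp only [Finset.mem_sdiff, Finset.mem_insert, Finset.mem_singleton] at hy'
        obtain ⟨h1 | h1, hy2⟩ := hy'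
        · exact absurd h1 hy2
        · subst h1; exact hi
    · -- card ≥ 3
      have hne : s.Nonempty := Finset.card_pos.mp (by omega)
      obtain ⟨z, hzs⟩ := hne
      set s' := s.erase z with hs'
      have hcard' : s'.card = s.card - 1 := Finset.card_erase_of_mem hzs
      have h2' : 2 ≤ s'.card := by omega
      have hsn' : s'.card ≤ n := by omega
      obtain ⟨a, i, hsub, hane, hbne, hcross⟩ := IH s' hsn' h2'
      set b := s' \ a with hb
      have hzs' : z ∉ s' := Finset.notMem_erase z s
      have hmem_s' : ∀ w ∈ s', w ∈ s ∧ w ≠ z := by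
        intro w hw
        exact ⟨Finset.mem_of_mem_erase hw, Finset.ne_of_mem_erase hw⟩
      have hasub : a ⊆ s := hsub.trans (Finset.erase_subset z s)
      have hbsub : b ⊆ s' := Finset.sdiff_subset
      have hdisjab : ∀ w, w ∈ a → w ∈ b → False := by
        intro w hwa hwb
        exact (Finset.mem_sdiff.mp hwb).2 hwa
      have hunion : ∀ w ∈ s', w ∈ a ∨ w ∈ b := by
        intro w hw
        by_cases hwa : w ∈ a
        · exact Or.inl hwa
        · exact Or.inr (Finset.mem_sdiff.mpr ⟨hw, hwa⟩)
      by_cases hA : ∀ w ∈ a, R i z w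
      · refine ⟨a, i, hasub, hane, ⟨z, Finset.mem_sdiff.mpr ⟨hzs, fun h => hzs' (hsub h)⟩⟩, ?_⟩
        intro x hx y hy
        obtain ⟨hys, hyna⟩ := Finset.mem_sdiff.mp hy
        by_cases hyz : y = z
        · subst hyz; exact hsym _ _ _ (hA x hx)
        · exact hcross x hx y (Finset.mem_sdiff.mpr ⟨Finset.mem_erase.mpr ⟨hyz, hys⟩, hyna⟩)
      · by_cases hB : ∀ w ∈ b, R i z w
        · have hbsubs : b ⊆ s := hbsub.trans (Finset.erase_subset z s)
          refine ⟨b, i, hbsubs, hbne, ⟨z, Finset.mem_sdiff.mpr ⟨hzs, fun h => hzs' (hbsub h)⟩⟩, ?_⟩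
          intro x hx y hy
          obtain ⟨hys, hynb⟩ := Finset.mem_sdiff.mp hy
          by_cases hyz : y = z
          · subst hyz; exact hsym _ _ _ (hB x hx)
          · have hys' : y ∈ s' := Finset.mem_erase.mpr ⟨hyz, hys⟩
            rcases hunion y hys' with hya | hyb
            · exact hsym _ _ _ (hcross y hya x hx)
            · exact absurd hyb hynb
        · push_neg at hA hB
          obtain ⟨a₁, ha₁, hna₁⟩ := hA
          obtain ⟨b₁, hb₁, hnb₁⟩ := hB
          have hza₁ : z ≠ a₁ := fun h => hzs' (hsub (h ▸ ha₁))
          have hzb₁ : z ≠ b₁ := fun h => hzs' (hbsub (h ▸ hb₁))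
          obtain ⟨j, hj⟩ := hcover z a₁ hza₁
          have hji : j ≠ i := fun h => hna₁ (h ▸ hj)
          -- all non-i neighbours of z in b get colour j
          have key_b : ∀ w ∈ b, ¬R i z w → R j z w := by
            intro w hw hnw
            have hzw : z ≠ w := fun h => hzs' (hbsub (h ▸ hw))
            have ha₁w : a₁ ≠ w := fun h => hdisjab w (h ▸ ha₁) hw
            obtain ⟨l, hl⟩ := hcover z w hzw
            have hli : l ≠ i := fun h => hnw (h ▸ hl)
            rcases h2col z a₁ w hza₁ hzw ha₁w j l i hj hl (hcross a₁ ha₁ w hw) with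
              h | h | h
            · exact h ▸ hl
            · exact absurd h hji
            · exact absurd h hli
          have hjb₁ : R j z b₁ := key_b b₁ hb₁ hnb₁
          have key_a : ∀ w ∈ a, ¬R i z w → R j z w := by
            intro w hw hnw
            have hzw : z ≠ w := fun h => hzs' (hsub (h ▸ hw))
            have hwb₁ : w ≠ b₁ := fun h => hdisjab w hw (h ▸ hb₁)
            obtain ⟨l, hl⟩ := hcover z w hzw
            have hli : l ≠ i := fun h => hnw (h ▸ hl)
            rcases h2col z w b₁ hzw hzb₁ hwb₁ l j i hl hjb₁
              (hcross w hw b₁ hb₁) with h | h | h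
            · exact h ▸ hl
            · exact absurd h hli
            · exact absurd h hji
          by_cases hall : ∀ w ∈ s', ¬ R i z w
          · -- z sees everything in colour j
            refine ⟨{z}, j, Finset.singleton_subset_iff.mpr hzs, ⟨z, by simp⟩,
              ⟨a₁, Finset.mem_sdiff.mpr ⟨hasub ha₁, by simp [hza₁.symm]⟩⟩, ?_⟩
            intro x hx y hy
            simp only [Finset.mem_singleton] at hx
            subst hx
            obtain ⟨hys, hynz⟩ := Finset.mem_sdiff.mp hy
            have hys' : y ∈ s' := Finset.mem_erase.mpr ⟨by simpa using hynz, hys⟩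
            rcases hunion y hys' with hya | hyb
            · exact key_a y hya (hall y hys')
            · exact key_b y hyb (hall y hys')
          · push_neg at hall
            obtain ⟨w₀, hw₀s, hw₀⟩ := hall
            set c := s'.filter (fun w => ¬ R i z w) with hc
            refine ⟨insert z c, i, ?_, ⟨z, Finset.mem_insert_self z c⟩, ⟨w₀, ?_⟩, ?_⟩
            · intro w hw
              rcases Finset.mem_insert.mp hw with rfl | hw
              · exact hzs
              · exact (hmem_s' w (Finset.mem_of_mem_filter w hw)).1
            · refine Finset.mem_sdiff.mpr ⟨(hmem_s' w₀ hw₀s).1, ?_⟩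
              intro h
              rcases Finset.mem_insert.mp h with h | h
              · exact (hmem_s' w₀ hw₀s).2 h
              · exact (Finset.mem_filter.mp h).2 hw₀
            · intro x hx y hy
              obtain ⟨hys, hyni⟩ := Finset.mem_sdiff.mp hy
              have hynz : y ≠ z := fun h => hyni (h ▸ Finset.mem_insert_self z c)
              have hys' : y ∈ s' := Finset.mem_erase.mpr ⟨hynz, hys⟩
              have hRy : R i z y := by
                by_contra hno
                exact hyni (Finset.mem_insert_of_mem (Finset.mem_filter.mpr ⟨hys', hno⟩))
              rcases Finset.mem_insert.mp hx with rfl | hxc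
              · exact hRy
              · obtain ⟨hxs', hnx⟩ := Finset.mem_filter.mp hxc
                have hxy : x ≠ y := fun h => hnx (h ▸ hRy)
                have hzx : z ≠ x := fun h => hzs' (h ▸ hxs')
                have hzy : z ≠ y := Ne.symm hynz
                rcases hunion x hxs' with hxa | hxb
                · rcases hunion y hys' with hya | hyb
                  · -- both in a : cograph argument with b₁
                    by_contra hnxy
                    have hnyx : ¬ R i y x := fun h => hnxy (hsym _ _ _ h)
                    have hyb₁ : y ≠ b₁ := fun h => hdisjab y hya (h ▸ hb₁)
                    have hxb₁ : b₁ ≠ x := fun h => hdisjab x hxa (h.symm ▸ hb₁)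
                    refine hcog i ⟨z, y, b₁, x, hzy, hzb₁, hzx, hyb₁, hxy.symm, hxb₁, ?_, ?_, ?_, ?_, ?_, ?_⟩
                    · exact ⟨hzy, Or.inl hRy⟩
                    · exact ⟨hyb₁, Or.inl (hcross y hya b₁ hb₁)⟩
                    · exact ⟨hxb₁, Or.inr (hcross x hxa b₁ hb₁)⟩
                    · rintro ⟨-, h | h⟩
                      · exact hnb₁ h
                      · exact hnb₁ (hsym _ _ _ h)
                    · rintro ⟨-, h | h⟩
                      · exact hnx h
                      · exact hnx (hsym _ _ _ h)
                    · rintro ⟨-, h | h⟩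
                      · exact hnyx h
                      · exact hnxy h
                  · exact hcross x hxa y hyb
                · rcases hunion y hys' with hya | hyb
                  · exact hsym _ _ _ (hcross y hya x hxb)
                  · -- both in b : cograph argument with a₁
                    by_contra hnxy
                    have hnyx : ¬ R i y x := fun h => hnxy (hsym _ _ _ h)
                    have hya₁ : y ≠ a₁ := fun h => hdisjab y (h ▸ ha₁) hyb
                    have hxa₁ : a₁ ≠ x := fun h => hdisjab x (h.symm ▸ ha₁) hxb
                    refine hcog i ⟨z, y, a₁, x, hzy, hza₁, hzx, hya₁, hxy.symm, hxa₁, ?_, ?_, ?_, ?_, ?_, ?_⟩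
                    · exact ⟨hzy, Or.inl hRy⟩
                    · exact ⟨hya₁, Or.inr (hcross a₁ ha₁ y hyb)⟩
                    · exact ⟨hxa₁, Or.inl (hcross a₁ ha₁ x hxb)⟩
                    · rintro ⟨-, h | h⟩
                      · exact hna₁ h
                      · exact hna₁ (hsym _ _ _ h)
                    · rintro ⟨-, h | h⟩
                      · exact hnx h
                      · exact hnx (hsym _ _ _ h)
                    · rintro ⟨-, h | h⟩
                      · exact hnyx h
                      · exact hnxy h


end Split

/-- The laminar family generated by repeatedly splitting along `A`. -/
inductive Desc {G : Type} [DecidableEq G] (A : Finset G → Finset G) :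
    Finset G → Finset G → Prop
  | refl (t : Finset G) : Desc A t t
  | left {t s : Finset G} : 2 ≤ t.card → Desc A (A t) s → Desc A t s
  | right {t s : Finset G} : 2 ≤ t.card → Desc A (t \ A t) s → Desc A t s

variable {G : Type} [DecidableEq G] {A : Finset G → Finset G}

section Desc

variable (hA : ∀ s : Finset G, 2 ≤ s.card → A s ⊆ s ∧ (A s).Nonempty ∧ (s \ A s).Nonempty)
include hA

lemma child_card_left {s : Finset G} (h2 : 2 ≤ s.card) : (A s).card < s.card := by
  obtain ⟨hsub, hne, hne'⟩ := hA s h2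
  exact Finset.card_lt_card (Finset.ssubset_iff_of_subset hsub |>.mpr
    (by obtain ⟨x, hx⟩ := hne'; exact ⟨x, (Finset.mem_sdiff.mp hx).1, (Finset.mem_sdiff.mp hx).2⟩))

lemma child_card_right {s : Finset G} (h2 : 2 ≤ s.card) : (s \ A s).card < s.card := by
  obtain ⟨hsub, hne, hne'⟩ := hA s h2
  refine Finset.card_lt_card (Finset.ssubset_iff_of_subset Finset.sdiff_subset |>.mpr ?_)
  obtain ⟨x, hx⟩ := hne
  exact ⟨x, hsub hx, fun h => (Finset.mem_sdiff.mp h).2 hx⟩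

lemma desc_subset {t s : Finset G} (h : Desc A t s) : s ⊆ t := by
  induction h with
  | refl t => exact subset_rfl
  | left h2 hd ih => exact ih.trans (hA _ h2).1
  | right h2 hd ih => exact ih.trans Finset.sdiff_subset

lemma desc_nonempty {t s : Finset G} (h : Desc A t s) (ht : t.Nonempty) : s.Nonempty := by
  induction h with
  | refl t => exact ht
  | left h2 hd ih => exact ih (hA _ h2).2.1
  | right h2 hd ih => exact ih (hA _ h2).2.2

lemma desc_child {t s : Finset G} (h : Desc A t s) (h2 : 2 ≤ s.card) :
    Desc A t (A s) ∧ Desc A t (s \ A s) := by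
  induction h with
  | refl t => exact ⟨.left h2 (.refl _), .right h2 (.refl _)⟩
  | left h2' hd ih => exact ⟨.left h2' (ih h2).1, .left h2' (ih h2).2⟩
  | right h2' hd ih => exact ⟨.right h2' (ih h2).1, .right h2' (ih h2).2⟩

lemma desc_cmp : ∀ (n : ℕ) (t : Finset G), t.card ≤ n → ∀ s s', Desc A t s → Desc A t s' →
    s ⊆ s' ∨ s' ⊆ s ∨ Disjoint s s' := by
  intro n
  induction n with
  | zero =>
    intro t ht s s' hd hd'
    have h0 : t = ∅ := Finset.card_eq_zero.mp (by omega)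
    left
    have := desc_subset hA hd
    have := desc_subset hA hd'
    subst h0
    simp_all [Finset.subset_empty]
  | succ n IH =>
    intro t ht s s' hd hd'
    cases hd with
    | refl => exact Or.inr (Or.inl (desc_subset hA hd'))
    | left h2 hd1 =>
      cases hd' with
      | refl => exact Or.inl (desc_subset hA (Desc.left h2 hd1))
      | left h2' hd2 =>
        exact IH (A t) (by have := child_card_left hA h2; omega) s s' hd1 hd2
      | right h2' hd2 =>
        exact Or.inr (Or.inr (Finset.disjoint_sdiff.mono (desc_subset hA hd1)
          (desc_subset hA hd2)))
    | right h2 hd1 =>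
      cases hd' with
      | refl => exact Or.inl (desc_subset hA (Desc.right h2 hd1))
      | left h2' hd2 =>
        exact Or.inr (Or.inr (Finset.sdiff_disjoint.mono (desc_subset hA hd1)
          (desc_subset hA hd2)))
      | right h2' hd2 =>
        exact IH (t \ A t) (by have := child_card_right hA h2; omega) s s' hd1 hd2

lemma desc_cmp' {r s s' : Finset G} (hd : Desc A r s) (hd' : Desc A r s') :
    s ⊆ s' ∨ s' ⊆ s ∨ Disjoint s s' :=
  desc_cmp hA r.card r le_rfl s s' hd hd'

/-- descend into a child -/
lemma desc_descend {r s t : Finset G} (hs : Desc A r s) (ht : Desc A r t)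
    (hsne : s.Nonempty) (hsub : s ⊆ t) (hne : s ≠ t) (h2 : 2 ≤ t.card) :
    s ⊆ A t ∨ s ⊆ t \ A t := by
  have hchild := desc_child hA ht h2
  rcases desc_cmp' hA hs hchild.1 with h | h | h
  · exact Or.inl h
  · -- A t ⊆ s
    rcases desc_cmp' hA hs hchild.2 with h' | h' | h'
    · exfalso
      obtain ⟨x, hx⟩ := (hA t h2).2.1
      exact (Finset.mem_sdiff.mp (h' (h hx))).2 hx
    · exfalso
      apply hne
      apply Finset.Subset.antisymm hsub
      intro x hx
      by_cases hxA : x ∈ A t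
      · exact h hxA
      · exact h' (Finset.mem_sdiff.mpr ⟨hx, hxA⟩)
    · -- Disjoint s (t \ A t) : s ⊆ A t
      left
      intro x hx
      by_contra hxA
      exact (Finset.disjoint_left.mp h') hx (Finset.mem_sdiff.mpr ⟨hsub hx, hxA⟩)
  · -- Disjoint s (A t)
    right
    intro x hx
    exact Finset.mem_sdiff.mpr ⟨hsub hx, fun hxA => (Finset.disjoint_left.mp h) hx hxA⟩

lemma desc_parent : ∀ {t u : Finset G}, Desc A t u → u ≠ t →
    ∃ v, Desc A t v ∧ 2 ≤ v.card ∧ (u = A v ∨ u = v \ A v) := by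
  intro t u hd
  induction hd with
  | refl t => intro h; exact absurd rfl h
  | @left t' u' h2 hd1 ih =>
    intro hne
    by_cases hu : u' = A t'
    · exact ⟨t', .refl t', h2, Or.inl hu⟩
    · obtain ⟨v, hv, h2v, hc⟩ := ih hu
      exact ⟨v, .left h2 hv, h2v, hc⟩
  | @right t' u' h2 hd1 ih =>
    intro hne
    by_cases hu : u' = t' \ A t'
    · exact ⟨t', .refl t', h2, Or.inr hu⟩
    · obtain ⟨v, hv, h2v, hc⟩ := ih hu
      exact ⟨v, .right h2 hv, h2v, hc⟩


lemma child_ssubset {v u : Finset G} (h2 : 2 ≤ v.card) (hc : u = A v ∨ u = v \ A v) :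
    u ⊂ v := by
  rcases hc with rfl | rfl
  · exact Finset.ssubset_iff_of_subset (hA v h2).1 |>.mpr
      (by obtain ⟨x, hx⟩ := (hA v h2).2.2
          exact ⟨x, (Finset.mem_sdiff.mp hx).1, (Finset.mem_sdiff.mp hx).2⟩)
  · refine Finset.ssubset_iff_of_subset Finset.sdiff_subset |>.mpr ?_
    obtain ⟨x, hx⟩ := (hA v h2).2.1
    exact ⟨x, (hA v h2).1 hx, fun h => (Finset.mem_sdiff.mp h).2 hx⟩

lemma child_nonempty {v u : Finset G} (h2 : 2 ≤ v.card) (hc : u = A v ∨ u = v \ A v) :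
    u.Nonempty := by
  rcases hc with rfl | rfl
  · exact (hA v h2).2.1
  · exact (hA v h2).2.2

lemma desc_parent_unique_aux {r v v' u : Finset G}
    (hv : Desc A r v) (hv' : Desc A r v')
    (h2 : 2 ≤ v.card) (h2' : 2 ≤ v'.card)
    (hc : u = A v ∨ u = v \ A v) (hc' : u = A v' ∨ u = v' \ A v')
    (hss : v ⊂ v') : False := by
  have hcv := desc_descend hA hv hv' (child_nonempty hA h2 hc |>.mono
    (child_ssubset hA h2 hc).subset) hss.subset (fun h => hss.ne h) h2'
  have husub : u ⊂ v := child_ssubset hA h2 hc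
  have hune : u.Nonempty := child_nonempty hA h2 hc
  have hloop : v ⊆ u → False := by
    intro h
    obtain ⟨x, hxv, hxu⟩ := Finset.exists_of_ssubset husub
    exact hxu (h hxv)
  rcases hc' with rfl | rfl
  · rcases hcv with h | h
    · exact hloop h
    · obtain ⟨x, hx⟩ := hune
      exact (Finset.mem_sdiff.mp (h (husub.subset hx))).2 hx
  · rcases hcv with h | h
    · obtain ⟨x, hx⟩ := hune
      exact (Finset.mem_sdiff.mp hx).2 (h (husub.subset hx))
    · exact hloop h

lemma desc_parent_unique {r v v' u : Finset G}
    (hv : Desc A r v) (hv' : Desc A r v')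
    (h2 : 2 ≤ v.card) (h2' : 2 ≤ v'.card)
    (hc : u = A v ∨ u = v \ A v) (hc' : u = A v' ∨ u = v' \ A v') :
    v = v' := by
  by_contra hne
  have hune : u.Nonempty := child_nonempty hA h2 hc
  rcases desc_cmp' hA hv hv' with h | h | h
  · exact desc_parent_unique_aux hA hv hv' h2 h2' hc hc' ⟨h, fun h' => hne (h.antisymm h')⟩
  · exact desc_parent_unique_aux hA hv' hv h2' h2 hc' hc ⟨h, fun h' => hne (h'.antisymm h)⟩
  · obtain ⟨x, hx⟩ := hune
    exact Finset.disjoint_left.mp h ((child_ssubset hA h2 hc).subset hx)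
      ((child_ssubset hA h2' hc').subset hx)

lemma desc_singleton : ∀ (n : ℕ) (t s : Finset G), s.card ≤ n → Desc A t s → ∀ g ∈ s,
    Desc A t {g} := by
  intro n
  induction n with
  | zero => intro t s hs hd g hg; exact absurd (Finset.card_pos.mpr ⟨g, hg⟩) (by omega)
  | succ n IH =>
    intro t s hs hd g hg
    by_cases h1 : s.card ≤ 1
    · have : s = {g} := by
        have : s.card = 1 := le_antisymm h1 (Finset.card_pos.mpr ⟨g, hg⟩)
        obtain ⟨x, rfl⟩ := Finset.card_eq_one.mp this
        simp_all
      exact this ▸ hd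
    · have h2 : 2 ≤ s.card := by omega
      have hch := desc_child hA hd h2
      by_cases hgA : g ∈ A s
      · exact IH t (A s) (by have := child_card_left hA h2; omega) hch.1 g hgA
      · exact IH t (s \ A s) (by have := child_card_right hA h2; omega) hch.2 g
          (Finset.mem_sdiff.mpr ⟨hg, hgA⟩)

end Desc

section PG
open SimpleGraph Walk
/-- The graph determined by a parent function. -/
def parentGraph {V : Type} (root : V) (par : V → V) : SimpleGraph V where
  Adj u v := u ≠ v ∧ ((u ≠ root ∧ v = par u) ∨ (v ≠ root ∧ u = par v))
  symm := by
    constructor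
    rintro u v ⟨h1, h2⟩
    exact ⟨h1.symm, h2.symm⟩
  loopless := ⟨fun v h => h.1 rfl⟩

variable {V : Type} {root : V} {par : V → V} {m : V → ℕ}

lemma parentGraph_adj_par (hm : ∀ v, v ≠ root → m v < m (par v)) {v : V} (hv : v ≠ root) :
    (parentGraph root par).Adj v (par v) :=
  ⟨fun h => absurd (hm v hv) (by rw [← h]; exact lt_irrefl _), Or.inl ⟨hv, rfl⟩⟩

lemma parentGraph_reachable (hm : ∀ v, v ≠ root → m v < m (par v))
    (hb : ∀ v, m v ≤ m root) :
    ∀ (n : ℕ) (v : V), m root - m v ≤ n → (parentGraph root par).Reachable v root := by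
  intro n
  induction n with
  | zero =>
    intro v hv
    by_cases h : v = root
    · exact h ▸ Reachable.refl v
    · exact absurd (by have := hm v h; have := hb (par v); omega : m root - m v ≥ 1) (by omega)
  | succ n IH =>
    intro v hv
    by_cases h : v = root
    · exact h ▸ Reachable.refl v
    · refine ((parentGraph_adj_par hm h).reachable).trans (IH (par v) ?_)
      have := hm v h
      have := hb (par v)
      omega

lemma list_exists_min {l : List V} (hl : l ≠ []) :
    ∃ u ∈ l, ∀ w ∈ l, m u ≤ m w := by
  induction l with
  | nil => exact absurd rfl hl
  | cons a l ih =>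
    rcases eq_or_ne l [] with rfl | hlne
    · exact ⟨a, by simp⟩
    · obtain ⟨u, hu, hmin⟩ := ih hlne
      rcases le_or_gt (m a) (m u) with h | h
      · refine ⟨a, by simp, ?_⟩
        intro w hw
        rcases List.mem_cons.mp hw with rfl | hw
        · exact le_rfl
        · exact h.trans (hmin w hw)
      · refine ⟨u, List.mem_cons_of_mem a hu, ?_⟩
        intro w hw
        rcases List.mem_cons.mp hw with rfl | hw
        · exact h.le
        · exact hmin w hw

lemma parentGraph_isTree (hm : ∀ v, v ≠ root → m v < m (par v))
    (hb : ∀ v, m v ≤ m root) : (parentGraph root par).IsTree := by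
  classical
  constructor
  · haveI : Nonempty V := ⟨root⟩
    exact Connected.mk (fun u v =>
      (parentGraph_reachable hm hb _ u le_rfl).trans
        (parentGraph_reachable hm hb _ v le_rfl).symm)
  · intro v c hc
    have hsupne : c.support ≠ [] := c.support_ne_nil
    obtain ⟨u, hu, hmin⟩ := list_exists_min (m := m) hsupne
    set c' := c.rotate u hu with hc'def
    have hc2 : c'.IsCycle := hc.rotate hu
    have hmem : ∀ w ∈ c'.support, m u ≤ m w := by
      intro w hw
      rw [support_eq_cons] at hw
      rcases List.mem_cons.mp hw with rfl | hw
      · exact le_rfl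
      · have hrot := support_rotate c u hu
        have : w ∈ c.support.tail := hrot.mem_iff.mp hw
        exact hmin w (List.mem_of_mem_tail this)
    clear_value c'
    cases c' with
    | nil => exact Walk.IsCycle.not_of_nil hc2
    | cons hadj p =>
      rename_i u₂
      rw [Walk.cons_isCycle_iff] at hc2
      obtain ⟨hp, hedge⟩ := hc2
      have hu₂mem : u₂ ∈ (Walk.cons hadj p).support := by
        rw [support_cons]
        exact List.mem_cons_of_mem _ p.start_mem_support
      have hune : u ≠ root := by
        intro h
        -- then u's neighbours must be children, i.e. u = par u₂ etc.; get m u₂ < m u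
        rcases hadj.2 with ⟨h1, h2⟩ | ⟨h1, h2⟩
        · exact h1 h
        · have := hm u₂ h1
          rw [← h2] at this
          exact absurd (hmem u₂ hu₂mem) (by omega)
      have hpar₂ : u₂ = par u := by
        rcases hadj.2 with ⟨h1, h2⟩ | ⟨h1, h2⟩
        · exact h2
        · have := hm u₂ h1
          rw [← h2] at this
          exact absurd (hmem u₂ hu₂mem) (by omega)
      -- last vertex before returning to u
      have hne2 : u ≠ u₂ := hadj.1
      obtain ⟨q', hadj', p₂, hpr⟩ := Walk.exists_eq_cons_of_ne hne2 p.reverse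
      have hq'mem : q' ∈ (Walk.cons hadj p).support := by
        rw [support_cons]
        refine List.mem_cons_of_mem _ ?_
        have : q' ∈ p.reverse.support := by
          rw [hpr, support_cons]
          exact List.mem_cons_of_mem _ p₂.start_mem_support
        rwa [support_reverse, List.mem_reverse] at this
      have hparq : q' = par u := by
        rcases hadj'.2 with ⟨h1, h2⟩ | ⟨h1, h2⟩
        · exact h2
        · have := hm q' h1
          rw [← h2] at this
          exact absurd (hmem q' hq'mem) (by omega)
      have hedge_mem : s(u, q') ∈ p.edges := by
        have : s(u, q') ∈ p.reverse.edges := by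
          rw [hpr, edges_cons]
          exact List.mem_cons_self
        rwa [edges_reverse, List.mem_reverse] at this
      rw [hparq, ← hpar₂] at hedge_mem
      exact hedge hedge_mem


end PG


section Backward

open SimpleGraph Walk

variable {G : Type} [Fintype G] {k : ℕ} {R : Fin k → G → G → Prop}

lemma backward [DecidableEq G] (hG : 3 ≤ Fintype.card G)
    (hirr : ∀ i x, ¬ R i x x)
    (hsym : ∀ i x y, R i x y → R i y x)
    (hdisj : ∀ i j x y, R i x y → R j x y → i = j)
    (hcover : ∀ x y : G, x ≠ y → ∃ i, R i x y)
    (hcog : ∀ i, IsCograph (relGraph (R i)))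
    (h2col : AtMostTwoColors k R) :
    HasEventTree G k R := by
  classical
  -- a default colour
  obtain ⟨x₀, y₀, hxy₀⟩ := Fintype.exists_pair_of_one_lt_card (α := G) (by omega)
  obtain ⟨i₀, hi₀⟩ := hcover x₀ y₀ hxy₀
  -- choose a split of every finset with at least 2 elements
  have hsplitE : ∀ s : Finset G, ∃ p : Finset G × Fin k, 2 ≤ s.card →
      (p.1 ⊆ s ∧ p.1.Nonempty ∧ (s \ p.1).Nonempty ∧
        ∀ x ∈ p.1, ∀ y ∈ s \ p.1, R p.2 x y) := by
    intro s
    by_cases h2 : 2 ≤ s.card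
    · obtain ⟨a, i, h⟩ := split_lemma hsym hdisj hcover hcog h2col s.card s le_rfl h2
      exact ⟨(a, i), fun _ => h⟩
    · exact ⟨(∅, i₀), fun h => absurd h h2⟩
  choose f hf using hsplitE
  set A : Finset G → Finset G := fun s => (f s).1 with hAdef
  set I : Finset G → Fin k := fun s => (f s).2 with hIdef
  have hA : ∀ s : Finset G, 2 ≤ s.card → A s ⊆ s ∧ (A s).Nonempty ∧ (s \ A s).Nonempty :=
    fun s h2 => ⟨(hf s h2).1, (hf s h2).2.1, (hf s h2).2.2.1⟩
  have hI : ∀ s : Finset G, 2 ≤ s.card → ∀ x ∈ A s, ∀ y ∈ s \ A s, R (I s) x y :=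
    fun s h2 => (hf s h2).2.2.2
  -- the vertex set
  set V : Type := {s : Finset G // Desc A Finset.univ s} with hVdef
  set root : V := ⟨Finset.univ, Desc.refl _⟩ with hrootdef
  have hcard_univ : 3 ≤ (Finset.univ : Finset G).card := by
    rwa [Finset.card_univ]
  have huniv_ne : (Finset.univ : Finset G).Nonempty :=
    Finset.card_pos.mp (by omega)
  have hVne : ∀ v : V, v.1.Nonempty := fun v => desc_nonempty hA v.2 huniv_ne
  have hVsub : ∀ v : V, v.1 ⊆ Finset.univ := fun v => Finset.subset_univ _
  have hne_root : ∀ v : V, v ≠ root ↔ v.1 ≠ Finset.univ := by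
    intro v
    constructor
    · intro h h'; exact h (Subtype.ext h')
    · intro h h'; exact h (congrArg Subtype.val h')
  -- the parent function
  have hparE : ∀ v : V, ∃ p : V, v ≠ root →
      2 ≤ p.1.card ∧ (v.1 = A p.1 ∨ v.1 = p.1 \ A p.1) := by
    intro v
    by_cases h : v = root
    · exact ⟨root, fun h' => absurd h h'⟩
    · obtain ⟨p, hp, h2, hc⟩ := desc_parent hA v.2 ((hne_root v).mp h)
      exact ⟨⟨p, hp⟩, fun _ => ⟨h2, hc⟩⟩
  choose par hpar using hparE
  have hm : ∀ v : V, v ≠ root → v.1.card < (par v).1.card := by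
    intro v hv
    exact Finset.card_lt_card (child_ssubset hA (hpar v hv).1 (hpar v hv).2)
  have hb : ∀ v : V, v.1.card ≤ root.1.card := fun v => Finset.card_le_card (hVsub v)
  set T : SimpleGraph V := parentGraph root par with hTdef
  have hT : T.IsTree := parentGraph_isTree hm hb
  have root_val : root.1 = (Finset.univ : Finset G) := rfl
  -- parent is unique
  have hpar_eq : ∀ (v p : V), 2 ≤ p.1.card → (v.1 = A p.1 ∨ v.1 = p.1 \ A p.1) →
      par v = p := by
    intro v p h2 hc
    have hvss : v.1 ⊂ p.1 := child_ssubset hA h2 hc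
    have hvne : v ≠ root := by
      rw [hne_root]
      intro h
      have h1 := Finset.card_lt_card hvss
      have h2'' := Finset.card_le_card (hVsub p)
      rw [h] at h1
      omega
    obtain ⟨h2', hc'⟩ := hpar v hvne
    exact Subtype.ext (desc_parent_unique hA (par v).2 p.2 h2' h2 hc' hc)
  have hchild_subset : ∀ v : V, v ≠ root → v.1 ⊆ (par v).1 := by
    intro v hv
    exact (child_ssubset hA (hpar v hv).1 (hpar v hv).2).subset
  -- minimality of the parent
  have hParMin : ∀ (n : ℕ) (u v : V), u.1.card ≤ n → v.1 ⊂ u.1 → (par v).1 ⊆ u.1 := by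
    intro n
    induction n with
    | zero =>
      intro u v hu hss
      exact absurd (Finset.card_pos.mpr (hVne u)) (by omega)
    | succ n IH =>
      intro u v hu hss
      have h2u : 2 ≤ u.1.card := by
        have h1 := Finset.card_pos.mpr (hVne v)
        have h2 := Finset.card_lt_card hss
        omega
      rcases desc_descend hA v.2 u.2 (hVne v) hss.subset hss.ne h2u with hc | hc
      · set c : V := ⟨A u.1, (desc_child hA u.2 h2u).1⟩ with hcdef
        by_cases he : v.1 = c.1
        · rw [hpar_eq v u h2u (Or.inl he)]
        · have hss' : v.1 ⊂ c.1 := Finset.ssubset_iff_subset_ne.mpr ⟨hc, he⟩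
          have hcc : c.1.card ≤ n := by
            have := child_card_left hA h2u
            simp only [hcdef] at *
            omega
          exact (IH c v hcc hss').trans (hA u.1 h2u).1
      · set c : V := ⟨u.1 \ A u.1, (desc_child hA u.2 h2u).2⟩ with hcdef
        by_cases he : v.1 = c.1
        · rw [hpar_eq v u h2u (Or.inr he)]
        · have hss' : v.1 ⊂ c.1 := Finset.ssubset_iff_subset_ne.mpr ⟨hc, he⟩
          have hcc : c.1.card ≤ n := by
            have := child_card_right hA h2u
            simp only [hcdef] at *
            omega
          exact (IH c v hcc hss').trans Finset.sdiff_subset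
  -- the walk to the root
  have hwalk : ∀ (n : ℕ) (v : V), (Finset.univ : Finset G).card - v.1.card ≤ n →
      ∃ p : T.Walk v root, p.IsPath ∧ (∀ u : V, u ∈ p.support ↔ v.1 ⊆ u.1) := by
    intro n
    induction n with
    | zero =>
      intro v hv
      have hveq : v.1 = (Finset.univ : Finset G) := Finset.eq_of_subset_of_card_le (hVsub v)
        (by have := Finset.card_le_card (hVsub v); omega)
      have hvr : v = root := Subtype.ext (hveq.trans root_val.symm)
      subst hvr
      refine ⟨Walk.nil, Walk.IsPath.nil, ?_⟩
      intro u
      simp only [Walk.support_nil, List.mem_singleton]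
      constructor
      · rintro rfl; exact subset_rfl
      · intro h
        have hueq : u.1 = (Finset.univ : Finset G) := Finset.eq_of_subset_of_card_le (hVsub u)
          (by have hh := Finset.card_le_card h; omega)
        exact Subtype.ext (hueq.trans root_val.symm)
    | succ n IH =>
      intro v hv
      by_cases hvr : v = root
      · subst hvr
        refine ⟨Walk.nil, Walk.IsPath.nil, ?_⟩
        intro u
        simp only [Walk.support_nil, List.mem_singleton]
        constructor
        · rintro rfl; exact subset_rfl
        · intro h
          have hueq : u.1 = (Finset.univ : Finset G) := Finset.eq_of_subset_of_card_le (hVsub u)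
            (by have hh := Finset.card_le_card h; omega)
          exact Subtype.ext (hueq.trans root_val.symm)
      · have hlt : v.1.card < (par v).1.card := hm v hvr
        have hple : (par v).1.card ≤ Finset.univ.card := Finset.card_le_card (hVsub _)
        obtain ⟨p', hp', hiff'⟩ := IH (par v) (by omega)
        have hadj : T.Adj v (par v) := parentGraph_adj_par hm hvr
        refine ⟨Walk.cons hadj p', ?_, ?_⟩
        · rw [Walk.cons_isPath_iff]
          refine ⟨hp', fun hmem => ?_⟩
          have := Finset.card_le_card ((hiff' v).mp hmem)
          omega
        · intro u
          rw [Walk.support_cons, List.mem_cons]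
          constructor
          · rintro (rfl | hmem)
            · exact subset_rfl
            · exact (hchild_subset v hvr).trans ((hiff' u).mp hmem)
          · intro hsub
            by_cases huv : u = v
            · exact Or.inl huv
            · right
              rw [hiff' u]
              have hss : v.1 ⊂ u.1 := Finset.ssubset_iff_subset_ne.mpr
                ⟨hsub, fun h => huv (Subtype.ext h.symm)⟩
              exact hParMin (Finset.univ : Finset G).card u v (Finset.card_le_card (hVsub u)) hss
  -- characterisation of ancestors
  have hAnc : ∀ u v : V, Anc T root u v ↔ v.1 ⊆ u.1 := by
    intro u v
    obtain ⟨p, hp, hiff⟩ := hwalk (Finset.univ : Finset G).card v (Nat.sub_le _ _)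
    constructor
    · intro h; exact (hiff u).mp (h p hp)
    · intro h q hq
      rw [(hT.existsUnique_path v root).unique hq hp]
      exact (hiff u).mpr h
  -- the leaves
  set ι : G → V := fun g => ⟨{g}, desc_singleton hA (Finset.univ : Finset G).card Finset.univ Finset.univ
    le_rfl (Desc.refl _) g (Finset.mem_univ g)⟩ with hiota
  have hinj : Function.Injective ι := fun g g' h =>
    Finset.singleton_injective (congrArg Subtype.val h)
  set t : V → Fin k := fun v => if 2 ≤ v.1.card then I v.1 else i₀ with htdef
  have hchild_ne_root : ∀ (p : V), 2 ≤ p.1.card → ∀ (c : V),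
      (c.1 = A p.1 ∨ c.1 = p.1 \ A p.1) → c ≠ root := by
    intro p h2 c hc
    rw [hne_root]
    intro h
    have h1 := Finset.card_lt_card (child_ssubset hA h2 hc)
    have h2' := Finset.card_le_card (hVsub p)
    rw [h] at h1
    omega
  have hchild_adj : ∀ (p : V), 2 ≤ p.1.card → ∀ (c : V),
      (c.1 = A p.1 ∨ c.1 = p.1 \ A p.1) → T.Adj p c := by
    intro p h2 c hc
    have hne : c ≠ p := by
      intro h
      exact (child_ssubset hA h2 hc).ne (congrArg Subtype.val h)
    have h' : T.Adj c p := ⟨hne, Or.inl ⟨hchild_ne_root p h2 c hc, (hpar_eq c p h2 hc).symm⟩⟩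
    exact h'.symm
  have hleaf : ∀ v : V, IsLeaf T root v ↔ ∃ g, ι g = v := by
    intro v
    constructor
    · rintro ⟨hvr, u, hu, huniq⟩
      by_cases h2 : 2 ≤ v.1.card
      · exfalso
        set c₁ : V := ⟨A v.1, (desc_child hA v.2 h2).1⟩ with hc₁
        set c₂ : V := ⟨v.1 \ A v.1, (desc_child hA v.2 h2).2⟩ with hc₂
        have e1 : c₁ = u := huniq c₁ (hchild_adj v h2 c₁ (Or.inl rfl))
        have e2 : c₂ = u := huniq c₂ (hchild_adj v h2 c₂ (Or.inr rfl))
        obtain ⟨x, hx⟩ := (hA v.1 h2).2.1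
        have : x ∈ v.1 \ A v.1 := by
          have := congrArg Subtype.val (e2.trans e1.symm)
          simp only [hc₁, hc₂] at this
          rw [this]
          exact hx
        exact (Finset.mem_sdiff.mp this).2 hx
      · have h1 : v.1.card = 1 := by
          have := Finset.card_pos.mpr (hVne v)
          omega
        obtain ⟨g, hg⟩ := Finset.card_eq_one.mp h1
        exact ⟨g, Subtype.ext hg.symm⟩
    · rintro ⟨g, rfl⟩
      have hgr : ι g ≠ root := by
        rw [hne_root]
        intro h
        have h3 := hcard_univ
        rw [← h] at h3
        simp [hiota] at h3
      refine ⟨hgr, par (ι g), parentGraph_adj_par hm hgr, ?_⟩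
      intro u hu
      rcases hu.2 with ⟨h1', h2'⟩ | ⟨h1', h2'⟩
      · exact h2'
      · exfalso
        have hlt := hm u h1'
        rw [← h2'] at hlt
        have : u.1.card = 0 := by
          have : (ι g).1.card = 1 := by simp [hiota]
          omega
        exact absurd (Finset.card_pos.mpr (hVne u)) (by omega)
  -- the representation property
  have hrep : RepresentsRel k R T root ι t := by
    intro x y hxy w hlca i
    obtain ⟨hwx, hwy, hmin⟩ := hlca
    rw [hAnc] at hwx hwy
    have hwx' : x ∈ w.1 := by
      have : ({x} : Finset G) ⊆ w.1 := hwx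
      simpa using this
    have hwy' : y ∈ w.1 := by
      have : ({y} : Finset G) ⊆ w.1 := hwy
      simpa using this
    have h2w : 2 ≤ w.1.card := by
      have hsub : ({x, y} : Finset G) ⊆ w.1 := by
        intro z hz
        rcases Finset.mem_insert.mp hz with rfl | hz
        · exact hwx'
        · rw [Finset.mem_singleton.mp hz]; exact hwy'
      have := Finset.card_le_card hsub
      rwa [Finset.card_pair hxy] at this
    have hminset : ∀ u : V, x ∈ u.1 → y ∈ u.1 → w.1 ⊆ u.1 := by
      intro u hx hy
      have h1 : Anc T root u (ι x) := (hAnc u (ι x)).mpr (by simpa [hiota] using hx)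
      have h2 : Anc T root u (ι y) := (hAnc u (ι y)).mpr (by simpa [hiota] using hy)
      exact (hAnc u w).mp (hmin u h1 h2)
    have hsep : (x ∈ A w.1 ∧ y ∈ w.1 \ A w.1) ∨ (y ∈ A w.1 ∧ x ∈ w.1 \ A w.1) := by
      by_cases hxA : x ∈ A w.1
      · by_cases hyA : y ∈ A w.1
        · exfalso
          have hsub := hminset ⟨A w.1, (desc_child hA w.2 h2w).1⟩ hxA hyA
          obtain ⟨z, hz1, hz2⟩ := Finset.exists_of_ssubset
            (child_ssubset hA h2w (Or.inl rfl) :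
              (⟨A w.1, (desc_child hA w.2 h2w).1⟩ : V).1 ⊂ w.1)
          exact hz2 (hsub hz1)
        · exact Or.inl ⟨hxA, Finset.mem_sdiff.mpr ⟨hwy', hyA⟩⟩
      · by_cases hyA : y ∈ A w.1
        · exact Or.inr ⟨hyA, Finset.mem_sdiff.mpr ⟨hwx', hxA⟩⟩
        · exfalso
          have hsub := hminset ⟨w.1 \ A w.1, (desc_child hA w.2 h2w).2⟩
            (Finset.mem_sdiff.mpr ⟨hwx', hxA⟩) (Finset.mem_sdiff.mpr ⟨hwy', hyA⟩)
          obtain ⟨z, hz1, hz2⟩ := Finset.exists_of_ssubset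
            (child_ssubset hA h2w (Or.inr rfl) :
              (⟨w.1 \ A w.1, (desc_child hA w.2 h2w).2⟩ : V).1 ⊂ w.1)
          exact hz2 (hsub hz1)
    have hRxy : R (I w.1) x y := by
      rcases hsep with ⟨h1, h2⟩ | ⟨h1, h2⟩
      · exact hI w.1 h2w x h1 y h2
      · exact hsym _ _ _ (hI w.1 h2w y h1 x h2)
    have htw : t w = I w.1 := if_pos h2w
    constructor
    · intro h
      rw [htw] at h
      exact h ▸ hRxy
    · intro h
      rw [htw]
      exact hdisj _ _ _ _ hRxy h
  exact ⟨V, T, root, ι, t, hT, hinj, hleaf, hrep⟩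

end Backward

end EventTree

/-- There is an event-labeled tree representing the pairwise disjoint
irreflexive symmetric relations `R 0, …, R (k-1)` (whose union is all pairs of distinct
elements of `G`, `|G| ≥ 3`) iff (i) each graph `G_{R i}` is a cograph and (ii) any three
pairwise distinct elements have their three pairs in at most two distinct relations. -/
theorem stmt0 (G : Type) [Fintype G] (hG : 3 ≤ Fintype.card G)
    (k : ℕ) (R : Fin k → G → G → Prop)
    (hirr : ∀ i x, ¬ R i x x)
    (hsym : ∀ i x y, R i x y → R i y x)
    (hdisj : ∀ i j x y, R i x y → R j x y → i = j)
    (hcover : ∀ x y : G, x ≠ y → ∃ i, R i x y) :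
    HasEventTree G k R ↔
      ((∀ i, IsCograph (relGraph (R i))) ∧ AtMostTwoColors k R) := by
  constructor
  · intro h
    exact EventTree.forward hsym h
  · rintro ⟨hcog, h2col⟩
    letI := Classical.decEq G
    exact EventTree.backward hG hirr hsym hdisj hcover hcog h2col
end

section
/- Let G be a finite set with |G| ≥ 3, let R be an irreflexive symmetric binary relation on G, and let R' be its complementary relation, consisting of all pairs (x,y) with x ≠ y not in R. Then there exists an event-labeled tree (T,t) representing R, R' if and only if the graph G_R is a cograph. -/
namespace TreeAux

variable {V : Type} [DecidableEq V] {T : SimpleGraph V} {root : V}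

noncomputable def pathTo (ht : T.IsTree) (root v : V) : T.Walk v root :=
  (ht.existsUnique_path v root).choose

lemma pathTo_isPath (ht : T.IsTree) (root v : V) : (pathTo ht root v).IsPath :=
  (ht.existsUnique_path v root).choose_spec.1

lemma pathTo_unique (ht : T.IsTree) {v : V} (p : T.Walk v root) (hp : p.IsPath) :
    p = pathTo ht root v :=
  (ht.existsUnique_path v root).choose_spec.2 p hp

lemma anc_iff (ht : T.IsTree) {u v : V} :
    Anc T root u v ↔ u ∈ (pathTo ht root v).support := by
  constructor
  · intro h; exact h _ (pathTo_isPath ht root v)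
  · intro h p hp; rw [pathTo_unique ht p hp]; exact h

lemma anc_refl (ht : T.IsTree) (v : V) : Anc T root v v :=
  fun p _ => p.start_mem_support

lemma anc_root (ht : T.IsTree) (v : V) : Anc T root root v :=
  fun p _ => p.end_mem_support

lemma pathTo_drop (ht : T.IsTree) {u v : V} (hu : u ∈ (pathTo ht root v).support) :
    pathTo ht root u = (pathTo ht root v).dropUntil u hu :=
  (pathTo_unique ht _ ((pathTo_isPath ht root v).dropUntil hu)).symm

lemma anc_trans (ht : T.IsTree) {u v w : V} (h1 : Anc T root u v) (h2 : Anc T root w u) :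
    Anc T root w v := by
  rw [anc_iff ht] at h1 h2 ⊢
  rw [pathTo_drop ht h1] at h2
  exact SimpleGraph.Walk.support_dropUntil_subset _ _ h2

lemma anc_antisymm (ht : T.IsTree) {u v : V} (h1 : Anc T root u v) (h2 : Anc T root v u) :
    u = v := by
  rw [anc_iff ht] at h1 h2
  rw [pathTo_drop ht h1] at h2
  by_contra hne
  have hspec := SimpleGraph.Walk.take_spec (pathTo ht root v) h1
  have hnd : ((pathTo ht root v).support).Nodup := (pathTo_isPath ht root v).support_nodup
  rw [← hspec, SimpleGraph.Walk.support_append] at hnd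
  have hdisj := List.disjoint_of_nodup_append hnd
  have hvtake : v ∈ ((pathTo ht root v).takeUntil u h1).support :=
    SimpleGraph.Walk.start_mem_support _
  have hvtail : v ∈ ((pathTo ht root v).dropUntil u h1).support.tail := by
    have := SimpleGraph.Walk.support_eq_cons ((pathTo ht root v).dropUntil u h1)
    rw [this] at h2
    rcases List.mem_cons.mp h2 with h | h
    · exact absurd h (Ne.symm hne)
    · exact h
  exact hdisj hvtake hvtail

/-- if `w` appears in the `takeUntil u` part of a path to root, then `u` is on the
path from `w` to root. -/
lemma mem_path_of_mem_takeUntil (ht : T.IsTree) {u v w : V}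
    (hu : u ∈ (pathTo ht root v).support)
    (hw : w ∈ ((pathTo ht root v).takeUntil u hu).support) :
    u ∈ (pathTo ht root w).support := by
  set p := pathTo ht root v with hp
  set t := p.takeUntil u hu with htdef
  have htpath : t.IsPath := (pathTo_isPath ht root v).takeUntil hu
  set q1 := t.dropUntil w hw with hq1
  set q2 := p.dropUntil u hu with hq2
  have hq1path : q1.IsPath := htpath.dropUntil hw
  have hq2path : q2.IsPath := (pathTo_isPath ht root v).dropUntil hu
  have hnd : (p.support).Nodup := (pathTo_isPath ht root v).support_nodup
  have hspec := SimpleGraph.Walk.take_spec p hu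
  rw [← hspec, SimpleGraph.Walk.support_append] at hnd
  have hdisj := List.disjoint_of_nodup_append hnd
  have hqpath : (q1.append q2).IsPath := by
    rw [SimpleGraph.Walk.isPath_def, SimpleGraph.Walk.support_append]
    refine List.Nodup.append hq1path.support_nodup (hq2path.support_nodup.tail) ?_
    intro a ha1 ha2
    exact hdisj (SimpleGraph.Walk.support_dropUntil_subset _ _ ha1) ha2
  rw [← pathTo_unique ht _ hqpath]
  rw [SimpleGraph.Walk.mem_support_append_iff]
  left; exact SimpleGraph.Walk.end_mem_support _

lemma anc_total (ht : T.IsTree) {u v w : V} (h1 : Anc T root u v) (h2 : Anc T root w v) :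
    Anc T root u w ∨ Anc T root w u := by
  rw [anc_iff ht] at h1 h2
  have hspec := SimpleGraph.Walk.take_spec (pathTo ht root v) h1
  have : w ∈ ((pathTo ht root v).takeUntil u h1).support ∨
      w ∈ ((pathTo ht root v).dropUntil u h1).support := by
    rw [← SimpleGraph.Walk.mem_support_append_iff, hspec]; exact h2
  rcases this with h | h
  · left
    rw [anc_iff ht]
    exact mem_path_of_mem_takeUntil ht h1 h
  · right
    rw [anc_iff ht, pathTo_drop ht h1]
    exact h

lemma exists_first {S : V → Prop} : ∀ {a b : V} (p : T.Walk a b), S b →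
    ∃ w, ∃ hw : w ∈ p.support, S w ∧
      ∀ u (hu : u ∈ p.support), S u → w ∈ (p.takeUntil u hu).support := by
  intro a b p
  induction p with
  | nil =>
    intro hS
    exact ⟨_, SimpleGraph.Walk.start_mem_support _, hS,
      fun u hu _ => SimpleGraph.Walk.start_mem_support _⟩
  | @cons a c b h q ih =>
    intro hS
    by_cases hSa : S a
    · exact ⟨a, SimpleGraph.Walk.start_mem_support _, hSa,
        fun u hu _ => SimpleGraph.Walk.start_mem_support _⟩
    · obtain ⟨w, hw, hSw, hfirst⟩ := ih hS
      refine ⟨w, by simp [hw], hSw, ?_⟩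
      intro u hu hSu
      have hua : u ≠ a := fun he => hSa (he ▸ hSu)
      have hu' : u ∈ q.support := by
        rcases (SimpleGraph.Walk.mem_support_iff _).mp hu with h' | h'
        · exact absurd h' hua
        · simpa using h'
      have : (SimpleGraph.Walk.cons h q).takeUntil u hu =
          SimpleGraph.Walk.cons h (q.takeUntil u hu') := by
        simp [SimpleGraph.Walk.takeUntil, Ne.symm hua]
      rw [this]
      simp only [SimpleGraph.Walk.support_cons, List.mem_cons]
      right; exact hfirst u hu' hSu

lemma lca_exists (ht : T.IsTree) (x y : V) : ∃ w, IsLCA T root w x y := by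
  obtain ⟨w, hw, hSw, hfirst⟩ := exists_first (S := fun u => u ∈ (pathTo ht root y).support)
    (pathTo ht root x) (SimpleGraph.Walk.end_mem_support _)
  refine ⟨w, (anc_iff ht).mpr hw, (anc_iff ht).mpr hSw, ?_⟩
  intro u hux huy
  rw [anc_iff ht] at hux huy ⊢
  exact mem_path_of_mem_takeUntil ht hux (hfirst u hux huy)

lemma lca_unique (ht : T.IsTree) {w w' x y : V} (h : IsLCA T root w x y)
    (h' : IsLCA T root w' x y) : w = w' :=
  anc_antisymm ht (h'.2.2 w h.1 h.2.1) (h.2.2 w' h'.1 h'.2.1)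

lemma isLCA_comm {w x y : V} (h : IsLCA T root w x y) : IsLCA T root w y x :=
  ⟨h.2.1, h.1, fun u h1 h2 => h.2.2 u h2 h1⟩

lemma lca_two_eq (ht : T.IsTree) {w1 w2 w3 x y z : V}
    (h1 : IsLCA T root w1 x y) (h2 : IsLCA T root w2 x z) (h3 : IsLCA T root w3 y z) :
    w1 = w2 ∨ w1 = w3 ∨ w2 = w3 := by
  rcases anc_total ht h2.2.1 h3.2.1 with hA | hB
  · -- Anc w2 w3
    have hw2y : Anc T root w2 y := anc_trans ht h3.1 hA
    have hw2w1 : Anc T root w2 w1 := h1.2.2 w2 h2.1 hw2y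
    rcases anc_total ht h1.1 h2.1 with hC | hD
    · -- Anc w1 w2
      exact Or.inl (anc_antisymm ht hC hw2w1)
    · -- Anc w2 w1
      rcases anc_total ht h1.2.1 h3.1 with hE | hF
      · -- Anc w1 w3
        have hw1z : Anc T root w1 z := anc_trans ht h3.2.1 hE
        have hw1w2 : Anc T root w1 w2 := h2.2.2 w1 h1.1 hw1z
        exact Or.inl (anc_antisymm ht hw1w2 hw2w1)
      · -- Anc w3 w1
        have hw3x : Anc T root w3 x := anc_trans ht h1.1 hF
        have hw3w2 : Anc T root w3 w2 := h2.2.2 w3 hw3x h3.2.1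
        exact Or.inr (Or.inr (anc_antisymm ht hA hw3w2))
  · -- Anc w3 w2
    have hw3x : Anc T root w3 x := anc_trans ht h2.1 hB
    have hw3w1 : Anc T root w3 w1 := h1.2.2 w3 hw3x h3.1
    rcases anc_total ht h1.2.1 h3.1 with hC | hD
    · -- Anc w1 w3
      exact Or.inr (Or.inl (anc_antisymm ht hC hw3w1))
    · -- Anc w3 w1
      rcases anc_total ht h1.1 h2.1 with hE | hF
      · -- Anc w1 w2
        have hw1z : Anc T root w1 z := anc_trans ht h2.2.1 hE
        have hw1w3 : Anc T root w1 w3 := h3.2.2 w1 h1.2.1 hw1z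
        exact Or.inr (Or.inl (anc_antisymm ht hw1w3 hw3w1))
      · -- Anc w2 w1
        have hw2y : Anc T root w2 y := anc_trans ht h1.2.1 hF
        have hw2w3 : Anc T root w2 w3 := h3.2.2 w2 hw2y h2.2.1
        exact Or.inr (Or.inr (anc_antisymm ht hw2w3 hB))

end TreeAux


namespace SplitAux

variable {G : Type} [DecidableEq G]

def stepRel (Q : G → G → Prop) (s : Finset G) (a b : G) : Prop := a ∈ s ∧ b ∈ s ∧ Q a b

def connW (Q : G → G → Prop) (s : Finset G) : Prop :=
  ∀ x ∈ s, ∀ y ∈ s, Relation.ReflTransGen (stepRel Q s) x y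

def P4In (Q : G → G → Prop) (s : Finset G) : Prop :=
  ∃ a b c d, a ∈ s ∧ b ∈ s ∧ c ∈ s ∧ d ∈ s ∧ a ≠ b ∧ a ≠ c ∧ a ≠ d ∧ b ≠ c ∧ b ≠ d ∧ c ≠ d ∧
    Q a b ∧ Q b c ∧ Q c d ∧ ¬ Q a c ∧ ¬ Q a d ∧ ¬ Q b d

lemma stepRel_symm {Q : G → G → Prop} (hsym : ∀ x y, Q x y → Q y x) (s : Finset G) :
    Symmetric (stepRel Q s) := fun _ _ ⟨h1, h2, h3⟩ => ⟨h2, h1, hsym _ _ h3⟩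

lemma reach_symm {Q : G → G → Prop} (hsym : ∀ x y, Q x y → Q y x) {s : Finset G} {a b : G}
    (h : Relation.ReflTransGen (stepRel Q s) a b) :
    Relation.ReflTransGen (stepRel Q s) b a :=
  (@Relation.ReflTransGen.symmetric _ _ ⟨stepRel_symm hsym s⟩).symm _ _ h

/-- last step into `v`. -/
lemma exists_last_step {Q : G → G → Prop} {s : Finset G} {u v : G} (hne : u ≠ v)
    (h : Relation.ReflTransGen (stepRel Q s) u v) : ∃ c ∈ s, Q c v := by
  rcases h.cases_tail with h | ⟨c, _, hc⟩
  · exact absurd h.symm hne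
  · exact ⟨c, hc.1, hc.2.2⟩

/-- The core combinatorial step of Seinsche's theorem. -/
lemma stepLemma {Q Q' : G → G → Prop}
    (hirr : ∀ x, ¬ Q x x) (hsym : ∀ x y, Q x y → Q y x)
    (hirr' : ∀ x, ¬ Q' x x)
    (hcomp : ∀ x y, x ≠ y → (Q' x y ↔ ¬ Q x y))
    {s : Finset G} {v : G} (hv : v ∈ s) (h2 : 2 ≤ s.card)
    (hnc : ¬ connW Q (s.erase v)) (hQ : connW Q s) (hQ' : connW Q' s) :
    P4In Q s := by
  classical
  set s' := s.erase v with hs'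
  -- there is w ∈ s' with ¬ Q v w
  have hw : ∃ w ∈ s', ¬ Q v w := by
    by_contra hall
    push_neg at hall
    obtain ⟨u, hu, hune⟩ := Finset.exists_mem_ne (s := s) (by omega) v
    obtain ⟨c, hc, hc2⟩ := exists_last_step (Q := Q') hune (hQ' u hu v hv)
    have hcv : c ≠ v := fun he => hirr' v (he ▸ hc2)
    have : Q v c := hall c (Finset.mem_erase.mpr ⟨hcv, hc⟩)
    exact ((hcomp c v hcv).mp hc2) (hsym _ _ this)
  obtain ⟨w, hws', hwv⟩ := hw
  set A := s'.filter (fun y => Relation.ReflTransGen (stepRel Q s') w y) with hA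
  set B := s' \ A with hB
  have hwA : w ∈ A := Finset.mem_filter.mpr ⟨hws', Relation.ReflTransGen.refl⟩
  have hAs' : A ⊆ s' := Finset.filter_subset _ _
  have hAclosed : ∀ x ∈ A, ∀ y ∈ s', Q x y → y ∈ A := by
    intro x hx y hy hQxy
    have hx' := Finset.mem_filter.mp hx
    exact Finset.mem_filter.mpr ⟨hy, hx'.2.tail ⟨hx'.1, hy, hQxy⟩⟩
  have hBclosed : ∀ x ∈ B, ∀ y ∈ s', Q x y → y ∈ B := by
    intro x hx y hy hQxy
    rw [hB, Finset.mem_sdiff] at hx ⊢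
    refine ⟨hy, fun hyA => hx.2 (hAclosed y hyA x hx.1 (hsym _ _ hQxy))⟩
  have hcross : ∀ x ∈ A, ∀ y ∈ B, ¬ Q x y := by
    intro x hx y hy hQxy
    have := hAclosed x hx y (Finset.mem_sdiff.mp hy).1 hQxy
    exact (Finset.mem_sdiff.mp hy).2 this
  -- B is nonempty
  have hBne : B.Nonempty := by
    by_contra hBe
    apply hnc
    intro x hx y hy
    have hxA : x ∈ A := by
      by_contra hxA
      exact hBe ⟨x, Finset.mem_sdiff.mpr ⟨hx, hxA⟩⟩
    have hyA : y ∈ A := by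
      by_contra hyA
      exact hBe ⟨y, Finset.mem_sdiff.mpr ⟨hy, hyA⟩⟩
    exact (reach_symm hsym (Finset.mem_filter.mp hxA).2).trans (Finset.mem_filter.mp hyA).2
  -- v has a Q-neighbor in any nonempty closed set
  have neighbor : ∀ C : Finset G, C ⊆ s' → (∀ x ∈ C, ∀ y ∈ s', Q x y → y ∈ C) →
      ∀ c0 ∈ C, ∃ x ∈ C, Q v x := by
    intro C hCs' hCcl c0 hc0
    have hreach := hQ c0 (Finset.mem_of_mem_erase (hCs' hc0)) v hv
    have claim : ∀ b, Relation.ReflTransGen (stepRel Q s) c0 b →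
        b ∈ C ∨ ∃ x ∈ C, Q v x := by
      intro b hb
      induction hb with
      | refl => exact Or.inl hc0
      | @tail c b hcb hstep ih =>
        rcases ih with hcC | hdone
        · by_cases hbv : b = v
          · exact Or.inr ⟨c, hcC, hsym _ _ (hbv ▸ hstep.2.2)⟩
          · exact Or.inl (hCcl c hcC b (Finset.mem_erase.mpr ⟨hbv, hstep.2.1⟩) hstep.2.2)
        · exact Or.inr hdone
    rcases claim v hreach with hvC | hdone
    · exact absurd (Finset.mem_erase.mp (hCs' hvC)).1 (by simp)
    · exact hdone
  obtain ⟨a0, ha0A, hva0⟩ := neighbor A hAs' hAclosed w hwA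
  obtain ⟨b0, hb0B, hvb0⟩ := neighbor B (Finset.sdiff_subset) hBclosed hBne.choose hBne.choose_spec
  -- walk from a0 to w inside A, find x y with Q v x, not Q v y, Q x y
  have hreachwa0 : Relation.ReflTransGen (stepRel Q s') w a0 := (Finset.mem_filter.mp ha0A).2
  have hreachaw : Relation.ReflTransGen (stepRel Q s') a0 w := reach_symm hsym hreachwa0
  have key : ∀ b, Relation.ReflTransGen (stepRel Q s') a0 b →
      (∃ x ∈ A, ∃ y ∈ A, Q v x ∧ ¬ Q v y ∧ Q x y) ∨ Q v b := by
    intro b hb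
    induction hb with
    | refl => exact Or.inr hva0
    | @tail c b hcb hstep ih =>
      rcases ih with hdone | hQvc
      · exact Or.inl hdone
      · by_cases hQvb : Q v b
        · exact Or.inr hQvb
        · refine Or.inl ⟨c, ?_, b, ?_, hQvc, hQvb, hstep.2.2⟩
          · exact Finset.mem_filter.mpr ⟨hstep.1, hreachwa0.trans hcb⟩
          · exact Finset.mem_filter.mpr ⟨hstep.2.1, (hreachwa0.trans hcb).tail hstep⟩
  rcases key w hreachaw with ⟨x, hxA, y, hyA, hQvx, hQvy, hQxy⟩ | hQvw
  · -- assemble the P4 : b0 - v - x - y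
    have hb0s' : b0 ∈ s' := (Finset.mem_sdiff.mp hb0B).1
    have hxs' : x ∈ s' := hAs' hxA
    have hys' : y ∈ s' := hAs' hyA
    refine ⟨b0, v, x, y, Finset.mem_of_mem_erase hb0s', hv, Finset.mem_of_mem_erase hxs',
      Finset.mem_of_mem_erase hys', (Finset.mem_erase.mp hb0s').1, ?_, ?_,
      (Ne.symm (Finset.mem_erase.mp hxs').1), (Ne.symm (Finset.mem_erase.mp hys').1), ?_,
      hsym _ _ hvb0, hQvx, hQxy, ?_, ?_, hQvy⟩
    · intro he; exact (Finset.mem_sdiff.mp hb0B).2 (he ▸ hxA)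
    · intro he; exact (Finset.mem_sdiff.mp hb0B).2 (he ▸ hyA)
    · intro he; exact hQvy (he ▸ hQvx)
    · intro hc; exact hcross x hxA b0 hb0B (hsym _ _ hc)
    · intro hc; exact hcross y hyA b0 hb0B (hsym _ _ hc)
  · exact absurd hQvw hwv

lemma p4in_mono {Q : G → G → Prop} {s t : Finset G} (hst : s ⊆ t) (h : P4In Q s) : P4In Q t := by
  obtain ⟨a, b, c, d, h1, h2, h3, h4, hr⟩ := h
  exact ⟨a, b, c, d, hst h1, hst h2, hst h3, hst h4, hr⟩

lemma conn_or_p4 {Q Q' : G → G → Prop}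
    (hirr : ∀ x, ¬ Q x x) (hsym : ∀ x y, Q x y → Q y x)
    (hirr' : ∀ x, ¬ Q' x x) (hsym' : ∀ x y, Q' x y → Q' y x)
    (hcomp : ∀ x y, x ≠ y → (Q' x y ↔ ¬ Q x y)) :
    ∀ n (s : Finset G), s.card ≤ n → 2 ≤ s.card → connW Q s → connW Q' s →
      P4In Q s ∨ P4In Q' s := by
  have hcomp' : ∀ x y, x ≠ y → (Q x y ↔ ¬ Q' x y) := by
    intro x y hxy
    rw [hcomp x y hxy, not_not]
  intro n
  induction n with
  | zero => intro s hc h2; omega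
  | succ n ih =>
    intro s hc h2 hQ hQ'
    obtain ⟨v, hv⟩ : s.Nonempty := Finset.card_pos.mp (by omega)
    set s' := s.erase v with hs'
    have hcard' : s'.card = s.card - 1 := Finset.card_erase_of_mem hv
    by_cases hc2 : 2 ≤ s'.card
    · by_cases hcc : connW Q s' ∧ connW Q' s'
      · rcases ih s' (by omega) hc2 hcc.1 hcc.2 with h | h
        · exact Or.inl (p4in_mono (Finset.erase_subset _ _) h)
        · exact Or.inr (p4in_mono (Finset.erase_subset _ _) h)
      · rcases not_and_or.mp hcc with hnc | hnc
        · exact Or.inl (stepLemma hirr hsym hirr' hcomp hv h2 hnc hQ hQ')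
        · exact Or.inr (stepLemma hirr' hsym' hirr hcomp' hv h2 hnc hQ' hQ)
    · -- s has exactly two elements; impossible to be both connected
      exfalso
      obtain ⟨u, hu, hune⟩ := Finset.exists_mem_ne (s := s) (by omega) v
      obtain ⟨c, hcs, hQcv⟩ := exists_last_step hune (hQ u hu v hv)
      obtain ⟨c2, hc2s, hQ'c2v⟩ := exists_last_step hune (hQ' u hu v hv)
      have hcv : c ≠ v := fun he => hirr v (he ▸ hQcv)
      have hc2v : c2 ≠ v := fun he => hirr' v (he ▸ hQ'c2v)
      have h1 : Finset.card s' ≤ 1 := by omega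
      have hcu : c = u := Finset.card_le_one.mp h1 _
        (Finset.mem_erase.mpr ⟨hcv, hcs⟩) _ (Finset.mem_erase.mpr ⟨hune, hu⟩)
      have hc2u : c2 = u := Finset.card_le_one.mp h1 _
        (Finset.mem_erase.mpr ⟨hc2v, hc2s⟩) _ (Finset.mem_erase.mpr ⟨hune, hu⟩)
      exact (hcomp u v hune).mp (hc2u ▸ hQ'c2v) (hcu ▸ hQcv)

lemma exists_split {Q Q' : G → G → Prop}
    (hirr : ∀ x, ¬ Q x x) (hsym : ∀ x y, Q x y → Q y x)
    (hirr' : ∀ x, ¬ Q' x x) (hsym' : ∀ x y, Q' x y → Q' y x)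
    (hcomp : ∀ x y, x ≠ y → (Q' x y ↔ ¬ Q x y))
    {s : Finset G} (h2 : 2 ≤ s.card) (hnp : ¬ P4In Q s) :
    ∃ A : Finset G, A ⊆ s ∧ A.Nonempty ∧ (s \ A).Nonempty ∧
      ((∀ x ∈ A, ∀ y ∈ s \ A, ¬ Q x y) ∨ (∀ x ∈ A, ∀ y ∈ s \ A, Q x y)) := by
  classical
  have hnp' : ¬ P4In Q' s := by
    rintro ⟨a, b, c, d, has, hbs, hcs, hds, hab, hac, had, hbc, hbd, hcd,
      eab, ebc, ecd, nac, nad, nbd⟩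
    have Qac : Q a c := by
      by_contra h
      exact nac ((hcomp a c hac).mpr h)
    have Qad : Q a d := by
      by_contra h
      exact nad ((hcomp a d had).mpr h)
    have Qbd : Q b d := by
      by_contra h
      exact nbd ((hcomp b d hbd).mpr h)
    exact hnp ⟨c, a, d, b, hcs, has, hds, hbs, Ne.symm hac, hcd, Ne.symm hbc, had,
      hab, Ne.symm hbd, hsym _ _ Qac, Qad, hsym _ _ Qbd,
      fun h => (hcomp c d hcd).mp ecd h,
      fun h => (hcomp b c hbc).mp ebc (hsym _ _ h),
      fun h => (hcomp a b hab).mp eab h⟩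
  have hnb : ¬ (connW Q s ∧ connW Q' s) := by
    rintro ⟨h1, h1'⟩
    rcases conn_or_p4 hirr hsym hirr' hsym' hcomp s.card s le_rfl h2 h1 h1' with h | h
    · exact hnp h
    · exact hnp' h
  have mkSplit : ∀ (P : G → G → Prop), (∀ x y, P x y → P y x) → ¬ connW P s →
      ∃ A : Finset G, A ⊆ s ∧ A.Nonempty ∧ (s \ A).Nonempty ∧
        (∀ x ∈ A, ∀ y ∈ s \ A, ¬ P x y) := by
    intro P hPsym hnc
    unfold connW at hnc
    push_neg at hnc
    obtain ⟨x0, hx0, y0, hy0, hnr⟩ := hnc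
    refine ⟨s.filter (fun y => Relation.ReflTransGen (stepRel P s) x0 y), Finset.filter_subset _ _,
      ⟨x0, Finset.mem_filter.mpr ⟨hx0, Relation.ReflTransGen.refl⟩⟩,
      ⟨y0, Finset.mem_sdiff.mpr ⟨hy0, fun h => hnr (Finset.mem_filter.mp h).2⟩⟩, ?_⟩
    intro x hx y hy hPxy
    have hx' := Finset.mem_filter.mp hx
    have hy' := Finset.mem_sdiff.mp hy
    exact hy'.2 (Finset.mem_filter.mpr ⟨hy'.1, hx'.2.tail ⟨hx'.1, hy'.1, hPxy⟩⟩)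
  rcases not_and_or.mp hnb with hnc | hnc
  · obtain ⟨A, h1, h2', h3, h4⟩ := mkSplit Q hsym hnc
    exact ⟨A, h1, h2', h3, Or.inl h4⟩
  · obtain ⟨A, h1, h2', h3, h4⟩ := mkSplit Q' hsym' hnc
    refine ⟨A, h1, h2', h3, Or.inr ?_⟩
    intro x hx y hy
    have hxy : x ≠ y := fun he => (Finset.mem_sdiff.mp hy).2 (he ▸ hx)
    by_contra h
    exact h4 x hx y hy ((hcomp x y hxy).mpr h)

end SplitAux


inductive RT (G : Type) : Type
  | lf : G → RT G
  | nd : Fin 2 → RT G → RT G → RT G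

namespace RT
open SplitAux
variable {G : Type} [DecidableEq G]

def subtreeAt : RT G → List Bool → Option (RT G)
  | t, [] => some t
  | lf _, _ :: _ => none
  | nd _ l r, b :: p => subtreeAt (bif b then r else l) p

def leaves : RT G → List G
  | lf g => [g]
  | nd _ l r => leaves l ++ leaves r

lemma subtreeAt_append (t : RT G) (p q : List Bool) :
    subtreeAt t (p ++ q) = (subtreeAt t p).bind (fun t' => subtreeAt t' q) := by
  induction p generalizing t with
  | nil => simp [subtreeAt]
  | cons b p ih =>
    cases t with
    | lf g => simp [subtreeAt]
    | nd i l r => simp [subtreeAt, ih]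

def lcp : List Bool → List Bool → List Bool
  | a :: as, b :: bs => if a = b then a :: lcp as bs else []
  | _, _ => []

lemma lcp_prefix_left : ∀ p q : List Bool, lcp p q <+: p := by
  intro p
  induction p with
  | nil => intro q; cases q <;> simp [lcp]
  | cons a as ih =>
    intro q
    cases q with
    | nil => simp [lcp]
    | cons b bs =>
      by_cases h : a = b
      · simpa [lcp, h] using ih bs
      · simp [lcp, h]

lemma lcp_prefix_right : ∀ p q : List Bool, lcp p q <+: q := by
  intro p
  induction p with
  | nil => intro q; cases q <;> simp [lcp]
  | cons a as ih =>
    intro q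
    cases q with
    | nil => simp [lcp]
    | cons b bs =>
      by_cases h : a = b
      · subst h; simpa [lcp] using ih bs
      · simp [lcp, h]

lemma prefix_lcp : ∀ (r p q : List Bool), r <+: p → r <+: q → r <+: lcp p q := by
  intro r
  induction r with
  | nil => intro p q _ _; exact List.nil_prefix
  | cons c cs ih =>
    intro p q hp hq
    obtain ⟨p', rfl⟩ := hp
    obtain ⟨q', rfl⟩ := hq
    simp only [List.cons_append, lcp, if_pos rfl]
    exact List.cons_prefix_cons.mpr ⟨rfl, ih _ _ (List.prefix_append cs p') (List.prefix_append cs q')⟩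

lemma mem_leaves_of_pos {t : RT G} {p : List Bool} {g : G}
    (h : subtreeAt t p = some (lf g)) : g ∈ leaves t := by
  induction t generalizing p with
  | lf g' =>
    cases p with
    | nil => simp [subtreeAt] at h; simp [leaves, h]
    | cons b q => simp [subtreeAt] at h
  | nd i l r ihl ihr =>
    cases p with
    | nil => simp [subtreeAt] at h
    | cons b q =>
      cases b with
      | false => simp only [subtreeAt, cond_false] at h; simp [leaves, ihl h]
      | true => simp only [subtreeAt, cond_true] at h; simp [leaves, ihr h]

lemma exists_pos {t : RT G} {g : G} (h : g ∈ leaves t) :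
    ∃ p, subtreeAt t p = some (lf g) := by
  induction t with
  | lf g' => simp [leaves] at h; exact ⟨[], by simp [subtreeAt, h]⟩
  | nd i l r ihl ihr =>
    simp only [leaves, List.mem_append] at h
    rcases h with h | h
    · obtain ⟨p, hp⟩ := ihl h; exact ⟨false :: p, by simpa [subtreeAt] using hp⟩
    · obtain ⟨p, hp⟩ := ihr h; exact ⟨true :: p, by simpa [subtreeAt] using hp⟩

lemma pos_unique {t : RT G} (hnd : (leaves t).Nodup) :
    ∀ {p1 p2 : List Bool} {g : G}, subtreeAt t p1 = some (lf g) →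
      subtreeAt t p2 = some (lf g) → p1 = p2 := by
  induction t with
  | lf g' =>
    intro p1 p2 g h1 h2
    cases p1 with
    | nil =>
      cases p2 with
      | nil => rfl
      | cons b q => simp [subtreeAt] at h2
    | cons b q => simp [subtreeAt] at h1
  | nd i l r ihl ihr =>
    intro p1 p2 g h1 h2
    have hndl : (leaves l).Nodup := (List.nodup_append.mp (by simpa [leaves] using hnd)).1
    have hndr : (leaves r).Nodup := (List.nodup_append.mp (by simpa [leaves] using hnd)).2.1
    have hdisj := List.disjoint_of_nodup_append (by simpa [leaves] using hnd)
    cases p1 with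
    | nil => simp [subtreeAt] at h1
    | cons b1 q1 =>
      cases p2 with
      | nil => simp [subtreeAt] at h2
      | cons b2 q2 =>
        cases b1 <;> cases b2 <;>
          simp only [subtreeAt, cond_false, cond_true] at h1 h2
        · exact congrArg _ (ihl hndl h1 h2)
        · exact absurd (mem_leaves_of_pos h2) (fun hr => hdisj (mem_leaves_of_pos h1) hr)
        · exact absurd (mem_leaves_of_pos h1) (fun hr => hdisj (mem_leaves_of_pos h2) hr)
        · exact congrArg _ (ihr hndr h1 h2)

lemma build (R : G → G → Prop) [DecidableRel R] (hirr : ∀ x, ¬ R x x) (hsym : ∀ x y, R x y → R y x) :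
    ∀ n (s : Finset G), s.card ≤ n → s.Nonempty → ¬ P4In R s →
    ∃ tr : RT G, (leaves tr).Nodup ∧ (leaves tr).toFinset = s ∧
      ∀ x y (px py : List Bool), x ≠ y → subtreeAt tr px = some (lf x) →
        subtreeAt tr py = some (lf y) →
        ∃ l' r', subtreeAt tr (lcp px py) = some (nd (if R x y then 0 else 1) l' r') := by
  classical
  intro n
  induction n with
  | zero =>
    intro s hc hne
    exact absurd (Finset.card_pos.mpr hne) (by omega)
  | succ n ih =>
    intro s hc hne hnp
    by_cases h1 : s.card = 1
    · obtain ⟨g, rfl⟩ := Finset.card_eq_one.mp h1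
      refine ⟨lf g, by simp [leaves], by simp [leaves], ?_⟩
      intro x y px py hxy hpx hpy
      exfalso
      have hx : x = g := by
        cases px with
        | nil => simpa [subtreeAt, RT.lf.injEq, eq_comm] using hpx
        | cons b q => simp [subtreeAt] at hpx
      have hy : y = g := by
        cases py with
        | nil => simpa [subtreeAt, RT.lf.injEq, eq_comm] using hpy
        | cons b q => simp [subtreeAt] at hpy
      exact hxy (hx.trans hy.symm)
    · have h2 : 2 ≤ s.card := by
        have := Finset.card_pos.mpr hne; omega
      obtain ⟨A, hAs, hAne, hBne, hcross⟩ := exists_split (Q := R)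
        (Q' := fun x y => x ≠ y ∧ ¬ R x y) hirr hsym (fun x h => h.1 rfl)
        (fun x y h => ⟨Ne.symm h.1, fun hr => h.2 (hsym _ _ hr)⟩)
        (fun x y hxy => ⟨fun h => h.2, fun h => ⟨hxy, h⟩⟩) h2 hnp
      set B := s \ A with hB
      have hAcard : A.card ≤ n := by
        have hAB : A ⊂ s := Finset.ssubset_iff_of_subset hAs |>.mpr
          (by obtain ⟨y, hy⟩ := hBne; exact ⟨y, (Finset.mem_sdiff.mp hy).1,
            (Finset.mem_sdiff.mp hy).2⟩)
        have := Finset.card_lt_card hAB; omega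
      have hBcard : B.card ≤ n := by
        have hBA : B ⊂ s := Finset.ssubset_iff_of_subset (Finset.sdiff_subset) |>.mpr
          (by obtain ⟨y, hy⟩ := hAne; exact ⟨y, hAs hy, by simp [hB, hy]⟩)
        have := Finset.card_lt_card hBA; omega
      obtain ⟨trA, hndA, htfA, hspecA⟩ := ih A hAcard hAne
        (fun h => hnp (p4in_mono hAs h))
      obtain ⟨trB, hndB, htfB, hspecB⟩ := ih B hBcard hBne
        (fun h => hnp (p4in_mono (Finset.sdiff_subset) h))
      have hmemA : ∀ {z}, z ∈ leaves trA → z ∈ A := by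
        intro z hz; rw [← htfA]; exact List.mem_toFinset.mpr hz
      have hmemB : ∀ {z}, z ∈ leaves trB → z ∈ B := by
        intro z hz; rw [← htfB]; exact List.mem_toFinset.mpr hz
      -- the label of the new root
      set i : Fin 2 := (if ∀ x ∈ A, ∀ y ∈ s \ A, R x y then 0 else 1) with hi
      have hiuniform : ∀ x y, x ∈ A → y ∈ B → x ≠ y → i = if R x y then 0 else 1 := by
        intro x y hx hy hxy
        rcases hcross with hnone | hall
        · have hnR : ¬ R x y := hnone x hx y hy
          have : ¬ ∀ x ∈ A, ∀ y ∈ s \ A, R x y := fun h => hnR (h x hx y hy)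
          rw [hi, if_neg this, if_neg hnR]
        · have hR : R x y := hall x hx y hy
          rw [hi, if_pos hall, if_pos hR]
      refine ⟨nd i trA trB, ?_, ?_, ?_⟩
      · rw [leaves, List.nodup_append]
        refine ⟨hndA, hndB, ?_⟩
        intro a haA b haB hab
        subst hab
        exact absurd (hmemA haA) (Finset.mem_sdiff.mp (hmemB haB)).2
      · rw [leaves, List.toFinset_append, htfA, htfB]
        exact Finset.union_sdiff_of_subset hAs
      · intro x y px py hxy hpx hpy
        cases px with
        | nil => simp [subtreeAt] at hpx
        | cons bx qx =>
          cases py with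
          | nil => simp [subtreeAt] at hpy
          | cons by' qy =>
            cases bx <;> cases by' <;>
              simp only [subtreeAt, cond_false, cond_true] at hpx hpy
            · -- both left
              obtain ⟨l', r', hres⟩ := hspecA x y qx qy hxy hpx hpy
              refine ⟨l', r', ?_⟩
              simpa [lcp, subtreeAt] using hres
            · -- x left, y right
              refine ⟨trA, trB, ?_⟩
              have hx := hmemA (mem_leaves_of_pos hpx)
              have hy := hmemB (mem_leaves_of_pos hpy)
              simp only [lcp, Bool.false_eq_true, if_false, subtreeAt]
              rw [hiuniform x y hx hy hxy]
            · -- x right, y left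
              refine ⟨trA, trB, ?_⟩
              have hx := hmemB (mem_leaves_of_pos hpx)
              have hy := hmemA (mem_leaves_of_pos hpy)
              simp only [lcp, Bool.true_eq_false, if_false, subtreeAt]
              have : i = if R y x then 0 else 1 := hiuniform y x hy hx (Ne.symm hxy)
              rw [this]
              by_cases hR : R x y
              · rw [if_pos (hsym _ _ hR), if_pos hR]
              · rw [if_neg (fun h => hR (hsym _ _ h)), if_neg hR]
            · -- both right
              obtain ⟨l', r', hres⟩ := hspecB x y qx qy hxy hpx hpy
              refine ⟨l', r', ?_⟩
              simpa [lcp, subtreeAt] using hres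


def Valid (t : RT G) (p : List Bool) : Prop := (subtreeAt t p).isSome

abbrev Vt (t : RT G) := {p : List Bool // Valid t p}

lemma valid_nil (t : RT G) : Valid t [] := by simp [Valid, subtreeAt]

lemma valid_prefix {t : RT G} {p q : List Bool} (h : q <+: p) (hp : Valid t p) : Valid t q := by
  obtain ⟨r, rfl⟩ := h
  rw [Valid, subtreeAt_append] at hp
  cases hq : subtreeAt t q with
  | none => rw [hq] at hp; simp at hp
  | some t' => simp [Valid, hq]

def graph (t : RT G) : SimpleGraph (Vt t) where
  Adj u v := (u.val = v.val.dropLast ∧ v.val ≠ []) ∨ (v.val = u.val.dropLast ∧ u.val ≠ [])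
  symm := ⟨by intro u v h; tauto⟩
  loopless := by
    constructor
    rintro ⟨p, hp⟩ h
    rcases h with ⟨h1, h2⟩ | ⟨h1, h2⟩ <;>
    · simp only at h1 h2
      have hl := congrArg List.length h1
      rw [List.length_dropLast] at hl
      have : 0 < p.length := List.length_pos_iff.mpr h2
      omega

def root (t : RT G) : Vt t := ⟨[], valid_nil t⟩

def parent (t : RT G) (v : Vt t) : Vt t :=
  ⟨v.val.dropLast, valid_prefix (List.dropLast_prefix _) v.2⟩

lemma adj_parent {t : RT G} {v : Vt t} (h : v.val ≠ []) : (graph t).Adj v (parent t v) :=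
  Or.inr ⟨rfl, h⟩

lemma ne_root_iff {t : RT G} {v : Vt t} : v ≠ root t ↔ v.val ≠ [] := by
  constructor
  · intro h he; exact h (Subtype.ext he)
  · intro h he; exact h (congrArg Subtype.val he)

def chainWalk (t : RT G) : (v : Vt t) → (graph t).Walk v (root t)
  | v =>
    if h : v.val = [] then
      (SimpleGraph.Walk.nil (u := v)).copy rfl (Subtype.ext h)
    else
      .cons (adj_parent h) (chainWalk t (parent t v))
  termination_by v => v.val.length
  decreasing_by
    show (v.val.dropLast).length < v.val.length
    rw [List.length_dropLast]
    have : 0 < v.val.length := List.length_pos_iff.mpr h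
    omega

lemma prefix_iff {p q : List Bool} (h : p ≠ []) : q <+: p ↔ q = p ∨ q <+: p.dropLast := by
  constructor
  · intro hq
    by_cases hl : q.length = p.length
    · exact Or.inl (List.IsPrefix.eq_of_length hq hl)
    · right
      obtain ⟨r, rfl⟩ := hq
      have hr : r ≠ [] := by
        intro he; subst he; simp at hl
      rw [List.dropLast_append_of_ne_nil hr]
      exact ⟨r.dropLast, rfl⟩
  · rintro (rfl | hq)
    · exact List.prefix_refl _
    · exact hq.trans (List.dropLast_prefix _)

lemma mem_chainWalk_support {t : RT G} : ∀ (v u : Vt t),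
    (u ∈ (chainWalk t v).support ↔ u.val <+: v.val) := by
  suffices H : ∀ (n : ℕ) (v : Vt t), v.val.length = n →
      ∀ u : Vt t, (u ∈ (chainWalk t v).support ↔ u.val <+: v.val) by
    exact fun v u => H _ v rfl u
  intro n
  induction n using Nat.strong_induction_on with
  | _ n ih =>
    intro v hn u
    rw [chainWalk]
    by_cases h : v.val = []
    · rw [dif_pos h]
      simp only [SimpleGraph.Walk.support_copy, SimpleGraph.Walk.support_nil, List.mem_singleton]
      rw [h, List.prefix_nil]
      constructor
      · rintro rfl; exact h ▸ rfl
      · intro hu; exact Subtype.ext (hu.trans h.symm)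
    · rw [dif_neg h]
      simp only [SimpleGraph.Walk.support_cons, List.mem_cons]
      rw [prefix_iff h]
      have hlt : (parent t v).val.length < n := by
        simp only [parent, List.length_dropLast]
        have : 0 < v.val.length := List.length_pos_iff.mpr h
        omega
      rw [ih _ (hn ▸ hlt) (parent t v) rfl u]
      constructor
      · rintro (rfl | hu)
        · exact Or.inl rfl
        · exact Or.inr hu
      · rintro (he | hu)
        · exact Or.inl (Subtype.ext he)
        · exact Or.inr hu

lemma chainWalk_isPath {t : RT G} : ∀ (v : Vt t), (chainWalk t v).IsPath := by
  suffices H : ∀ (n : ℕ) (v : Vt t), v.val.length = n → (chainWalk t v).IsPath by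
    exact fun v => H _ v rfl
  intro n
  induction n using Nat.strong_induction_on with
  | _ n ih =>
    intro v hn
    rw [chainWalk]
    by_cases h : v.val = []
    · rw [dif_pos h]
      simp [SimpleGraph.Walk.isPath_def]
    · rw [dif_neg h]
      have hlt : (parent t v).val.length < n := by
        simp only [parent, List.length_dropLast]
        have : 0 < v.val.length := List.length_pos_iff.mpr h
        omega
      refine (ih _ (hn ▸ hlt) _ rfl).cons ?_
      intro hmem
      rw [mem_chainWalk_support] at hmem
      have := hmem.length_le
      simp only [parent, List.length_dropLast] at this
      have : 0 < v.val.length := List.length_pos_iff.mpr h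
      omega

lemma length_parent_lt {t : RT G} {v : Vt t} (h : v.val ≠ []) :
    (parent t v).val.length < v.val.length := by
  show (v.val.dropLast).length < v.val.length
  rw [List.length_dropLast]
  have : 0 < v.val.length := List.length_pos_iff.mpr h
  omega

instance (t : RT G) : DecidableEq (Vt t) :=
  fun a b => decidable_of_iff (a.val = b.val) Subtype.ext_iff.symm

lemma parent_mem_support {t : RT G} : ∀ (n : ℕ) {w : Vt t}
    (q : (graph t).Walk w (root t)), q.length ≤ n → w ≠ root t →
    parent t w ∈ q.support := by
  intro n
  induction n with
  | zero =>
    intro w q hq hw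
    have := SimpleGraph.Walk.eq_of_length_eq_zero (Nat.le_zero.mp hq)
    exact absurd this hw
  | succ n ih =>
    intro w q hq hw
    cases q with
    | nil => exact absurd rfl hw
    | @cons _ u _ h q' =>
      rcases h with ⟨h1, h2⟩ | ⟨h1, h2⟩
      · -- w = parent u
        have hune : u ≠ root t := ne_root_iff.mpr h2
        have hpu : parent t u = w := Subtype.ext h1.symm
        have hqlen : q'.length ≤ n := by
          have hq0 : q'.length + 1 ≤ n + 1 := hq; omega
        have hwq' : w ∈ q'.support := by
          have := ih q' hqlen hune
          rwa [hpu] at this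
        have hq'' := q'.dropUntil w hwq'
        have hlen : (q'.dropUntil w hwq').length ≤ n := by
          have h1' := SimpleGraph.Walk.length_dropUntil_le q' hwq'
          omega
        have := ih (q'.dropUntil w hwq') hlen hw
        have hsub := SimpleGraph.Walk.support_dropUntil_subset q' hwq'
        refine List.mem_cons.mpr ?_
        exact Or.inr (hsub this)
      · -- u = parent w
        have : u = parent t w := Subtype.ext h1
        refine List.mem_cons.mpr ?_
        exact Or.inr (this ▸ q'.start_mem_support)

lemma path_unique {t : RT G} : ∀ {v : Vt t} (p : (graph t).Walk v (root t)),
    p.IsPath → p = chainWalk t v := by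
  suffices H : ∀ (n : ℕ) {v : Vt t} (p : (graph t).Walk v (root t)), v.val.length ≤ n →
      p.IsPath → p = chainWalk t v by
    intro v p hp
    exact H _ p le_rfl hp
  intro n
  induction n with
  | zero =>
    intro v p hv hp
    have hvnil : v.val = [] := List.length_eq_zero_iff.mp (Nat.le_zero.mp hv)
    have hvr : v = root t := Subtype.ext hvnil
    subst hvr
    have : p = SimpleGraph.Walk.nil := SimpleGraph.Walk.isPath_iff_eq_nil.mp hp
    rw [this, chainWalk, dif_pos (show (root t).val = [] from rfl)]
    rfl
  | succ n ih =>
    intro v p hv hp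
    by_cases hvnil : v.val = []
    · have hvr : v = root t := Subtype.ext hvnil
      subst hvr
      have : p = SimpleGraph.Walk.nil := SimpleGraph.Walk.isPath_iff_eq_nil.mp hp
      rw [this, chainWalk, dif_pos (show (root t).val = [] from rfl)]
      rfl
    · cases p with
      | nil => exact absurd rfl (ne_root_iff.mpr hvnil)
      | @cons _ u _ h q =>
        rcases h with ⟨h1, h2⟩ | ⟨h1, h2⟩
        · -- v = parent u : impossible since q avoids v
          exfalso
          have hune : u ≠ root t := ne_root_iff.mpr h2
          have hpu : parent t u = v := Subtype.ext h1.symm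
          have : parent t u ∈ q.support := parent_mem_support q.length q le_rfl hune
          rw [hpu] at this
          exact ((SimpleGraph.Walk.cons_isPath_iff _ _).mp hp).2 this
        · -- u = parent v
          have hu : u = parent t v := Subtype.ext h1
          subst hu
          have hq : q.IsPath := ((SimpleGraph.Walk.cons_isPath_iff _ _).mp hp).1
          have hlen : (parent t v).val.length ≤ n := by
            have := length_parent_lt (t := t) (v := v) hvnil
            omega
          rw [ih q hlen hq]
          conv_rhs => rw [chainWalk]
          rw [dif_neg hvnil]

lemma exists_max_len {t : RT G} : ∀ (l : List (Vt t)), l ≠ [] →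
    ∃ w ∈ l, ∀ u ∈ l, u.val.length ≤ w.val.length := by
  intro l
  induction l with
  | nil => intro h; exact absurd rfl h
  | cons a l ihl =>
    intro _
    cases hl : l with
    | nil => exact ⟨a, by simp, by simp⟩
    | cons b l' =>
      obtain ⟨w, hw, hmax⟩ := ihl (by simp [hl])
      by_cases hab : a.val.length ≤ w.val.length
      · refine ⟨w, List.mem_cons_of_mem _ (hl ▸ hw), ?_⟩
        intro u hu
        rcases List.mem_cons.mp hu with rfl | hu
        · exact hab
        · exact hmax u (hl ▸ hu)
      · refine ⟨a, List.mem_cons_self, ?_⟩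
        intro u hu
        rcases List.mem_cons.mp hu with rfl | hu
        · exact le_refl _
        · exact le_trans (hmax u (hl ▸ hu)) (by omega)

lemma isTree (t : RT G) : (graph t).IsTree := by
  constructor
  · rw [SimpleGraph.connected_iff]
    refine ⟨fun u v => ?_, ⟨root t⟩⟩
    exact ⟨(chainWalk t u).append (chainWalk t v).reverse⟩
  · intro v c hc
    obtain ⟨w, hwmem, hmax⟩ := exists_max_len c.support c.support_ne_nil
    set c' := c.rotate w hwmem with hc'def
    have hc' : c'.IsCycle := hc.rotate hwmem
    have hmem' : ∀ u, u ∈ c'.support → u ∈ c.support := by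
      intro u hu
      have hperm := SimpleGraph.Walk.support_rotate c w hwmem
      rcases (SimpleGraph.Walk.mem_support_iff _).mp hu with rfl | hu
      · exact hwmem
      · exact List.mem_of_mem_tail (hperm.perm.mem_iff.mp hu)
    have hlen3 : 3 ≤ c'.length := hc'.three_le_length
    cases hcc : c' with
    | nil => rw [hcc] at hlen3; simp at hlen3
    | @cons _ a _ h r =>
      rw [hcc] at hc' hlen3 hmem'
      have hr : r.IsPath := ((SimpleGraph.Walk.cons_isCycle_iff _ _).mp hc').1
      have haw : a ≠ w := by
        rintro rfl
        have : r = SimpleGraph.Walk.nil := SimpleGraph.Walk.isPath_iff_eq_nil.mp hr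
        rw [this] at hlen3
        simp at hlen3
      have hrrev : r.reverse.IsPath := hr.reverse
      cases hrr : r.reverse with
      | nil =>
        exfalso
        have := congrArg SimpleGraph.Walk.length hrr
        simp only [SimpleGraph.Walk.length_reverse, SimpleGraph.Walk.length_nil] at this
        rw [SimpleGraph.Walk.length_cons] at hlen3
        omega
      | @cons _ b _ h2 r2 =>
        rw [hrr] at hrrev
        have hr2 : r2.IsPath := ((SimpleGraph.Walk.cons_isPath_iff _ _).mp hrrev).1
        have hba : b ≠ a := by
          rintro rfl
          have : r2 = SimpleGraph.Walk.nil := SimpleGraph.Walk.isPath_iff_eq_nil.mp hr2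
          have hlenr := congrArg SimpleGraph.Walk.length hrr
          rw [this] at hlenr
          simp only [SimpleGraph.Walk.length_reverse, SimpleGraph.Walk.length_cons,
            SimpleGraph.Walk.length_nil] at hlenr
          rw [SimpleGraph.Walk.length_cons] at hlen3
          omega
        have hamem : a ∈ c.support := hmem' a (by
          simp only [SimpleGraph.Walk.support_cons, List.mem_cons]
          exact Or.inr r.start_mem_support)
        have hbmem : b ∈ c.support := hmem' b (by
          simp only [SimpleGraph.Walk.support_cons, List.mem_cons]
          right
          have : b ∈ r.reverse.support := by
            rw [hrr]
            simp only [SimpleGraph.Walk.support_cons, List.mem_cons]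
            exact Or.inr r2.start_mem_support
          rwa [SimpleGraph.Walk.support_reverse, List.mem_reverse] at this)
        have hpa : a = parent t w := by
          rcases h with ⟨h1, h2⟩ | ⟨h1, h2⟩
          · exfalso
            have hla := hmax a hamem
            have := congrArg List.length h1
            rw [List.length_dropLast] at this
            have : 0 < a.val.length := List.length_pos_iff.mpr h2
            omega
          · exact Subtype.ext h1
        have hpb : b = parent t w := by
          rcases h2 with ⟨h1, h2⟩ | ⟨h1, h2⟩
          · exfalso
            have hlb := hmax b hbmem
            have := congrArg List.length h1
            rw [List.length_dropLast] at this
            have : 0 < b.val.length := List.length_pos_iff.mpr h2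
            omega
          · exact Subtype.ext h1
        exact hba (hpa ▸ hpb)

lemma anc_iff_prefix {t : RT G} {u v : Vt t} :
    Anc (graph t) (root t) u v ↔ u.val <+: v.val := by
  constructor
  · intro h
    exact (mem_chainWalk_support v u).mp (h (chainWalk t v) (chainWalk_isPath v))
  · intro h p hp
    rw [path_unique p hp]
    exact (mem_chainWalk_support v u).mpr h

lemma isLCA_val {t : RT G} {w u v : Vt t} (h : IsLCA (graph t) (root t) w u v) :
    w.val = lcp u.val v.val := by
  have h1 : w.val <+: u.val := anc_iff_prefix.mp h.1
  have h2 : w.val <+: v.val := anc_iff_prefix.mp h.2.1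
  have hup : w.val <+: lcp u.val v.val := prefix_lcp _ _ _ h1 h2
  set z : Vt t := ⟨lcp u.val v.val, valid_prefix (lcp_prefix_left _ _) u.2⟩ with hz
  have hz1 : Anc (graph t) (root t) z u := anc_iff_prefix.mpr (lcp_prefix_left _ _)
  have hz2 : Anc (graph t) (root t) z v := anc_iff_prefix.mpr (lcp_prefix_right _ _)
  have hdown : lcp u.val v.val <+: w.val := anc_iff_prefix.mp (h.2.2 z hz1 hz2)
  exact hup.eq_of_length (Nat.le_antisymm hup.length_le hdown.length_le)

lemma valid_snoc {t : RT G} {p : List Bool} {b : Bool} :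
    Valid t (p ++ [b]) ↔ ∃ i l r, subtreeAt t p = some (nd i l r) := by
  rw [Valid, subtreeAt_append]
  cases hs : subtreeAt t p with
  | none => simp
  | some t' =>
    cases t' with
    | lf g => simp [subtreeAt]
    | nd i l r => cases b <;> simp [subtreeAt, Valid]

lemma isLeaf_iff {t : RT G} (htop : ∃ i l r, t = nd i l r) (v : Vt t) :
    IsLeaf (graph t) (root t) v ↔ ∃ g, subtreeAt t v.val = some (lf g) := by
  constructor
  · rintro ⟨hvr, u, hu, huniq⟩
    cases hsub : subtreeAt t v.val with
    | none => exact absurd v.2 (by simp [Valid, hsub])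
    | some t' =>
      cases t' with
      | lf g => exact ⟨g, rfl⟩
      | nd j l r =>
        exfalso
        set c0 : Vt t := ⟨v.val ++ [false], valid_snoc.mpr ⟨j, l, r, hsub⟩⟩ with hc0
        set c1 : Vt t := ⟨v.val ++ [true], valid_snoc.mpr ⟨j, l, r, hsub⟩⟩ with hc1
        have hadj0 : (graph t).Adj v c0 := Or.inl ⟨by simp [hc0, List.dropLast_concat], by simp [hc0]⟩
        have hadj1 : (graph t).Adj v c1 := Or.inl ⟨by simp [hc1, List.dropLast_concat], by simp [hc1]⟩
        have := (huniq c0 hadj0).trans (huniq c1 hadj1).symm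
        rw [hc0, hc1, Subtype.mk_eq_mk] at this
        simpa using this
  · rintro ⟨g, hg⟩
    have hvne : v.val ≠ [] := by
      intro h
      rw [h] at hg
      obtain ⟨i, l, r, rfl⟩ := htop
      simp [subtreeAt] at hg
    refine ⟨ne_root_iff.mpr hvne, parent t v, adj_parent hvne, ?_⟩
    intro y hy
    rcases hy with ⟨h1, h2⟩ | ⟨h1, h2⟩
    · exfalso
      have hy2 := y.2
      have hyval : y.val = v.val ++ [y.val.getLast h2] := by
        conv_lhs => rw [← List.dropLast_append_getLast h2]
        rw [← h1]
      rw [hyval] at hy2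
      obtain ⟨i, l, r, hnd⟩ := valid_snoc.mp hy2
      rw [hnd] at hg
      simp at hg
    · exact Subtype.ext h1

end RT

open TreeAux in
lemma forward_dir {G : Type} (R : G → G → Prop)
    (hirr : ∀ x, ¬ R x x) (hsym : ∀ x y, R x y → R y x) :
    HasEventTree G 2 ![R, fun x y => x ≠ y ∧ ¬ R x y] → IsCograph (relGraph R) := by
  rintro ⟨V, T, root, ι, t, htree, hinj, hleaf, hrep⟩
    ⟨a, b, c, d, hab, hac, had, hbc, hbd, hcd, eab, ebc, ecd, nac, nad, nbd⟩
  classical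
  have adjR : ∀ x y, (relGraph R).Adj x y ↔ R x y := by
    intro x y
    constructor
    · rintro ⟨hne, h | h⟩
      · exact h
      · exact hsym _ _ h
    · intro h
      exact ⟨fun he => hirr x (he ▸ h), Or.inl h⟩
  have Rab := (adjR a b).mp eab
  have Rbc := (adjR b c).mp ebc
  have Rcd := (adjR c d).mp ecd
  have Rac := fun h => nac ((adjR a c).mpr h)
  have Rad := fun h => nad ((adjR a d).mpr h)
  have Rbd := fun h => nbd ((adjR b d).mpr h)
  obtain ⟨wab, hwab⟩ := lca_exists htree (ι a) (ι b)
  obtain ⟨wac, hwac⟩ := lca_exists htree (ι a) (ι c)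
  obtain ⟨wad, hwad⟩ := lca_exists htree (ι a) (ι d)
  obtain ⟨wbc, hwbc⟩ := lca_exists htree (ι b) (ι c)
  obtain ⟨wbd, hwbd⟩ := lca_exists htree (ι b) (ι d)
  obtain ⟨wcd, hwcd⟩ := lca_exists htree (ι c) (ι d)
  have tab : t wab = 0 := (hrep a b hab wab hwab 0).mpr Rab
  have tbc : t wbc = 0 := (hrep b c hbc wbc hwbc 0).mpr Rbc
  have tcd : t wcd = 0 := (hrep c d hcd wcd hwcd 0).mpr Rcd
  have tac : t wac = 1 := (hrep a c hac wac hwac 1).mpr ⟨hac, Rac⟩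
  have tad : t wad = 1 := (hrep a d had wad hwad 1).mpr ⟨had, Rad⟩
  have tbd : t wbd = 1 := (hrep b d hbd wbd hwbd 1).mpr ⟨hbd, Rbd⟩
  have e1 : wab = wbc := by
    rcases lca_two_eq htree hwab hwac hwbc with h | h | h
    · rw [h, tac] at tab; exact absurd tab (by decide)
    · exact h
    · rw [h, tbc] at tac; exact absurd tac (by decide)
  have e2 : wbc = wcd := by
    rcases lca_two_eq htree hwbc hwbd hwcd with h | h | h
    · rw [h, tbd] at tbc; exact absurd tbc (by decide)
    · exact h
    · rw [← h, tbd] at tcd; exact absurd tcd (by decide)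
  have e3 : wac = wad := by
    rcases lca_two_eq htree hwac hwad hwcd with h | h | h
    · exact h
    · rw [h, tcd] at tac; exact absurd tac (by decide)
    · rw [← h, tad] at tcd; exact absurd tcd (by decide)
  have h1 : Anc T root wab wac := by
    refine hwac.2.2 wab hwab.1 ?_
    rw [e1]; exact hwbc.2.1
  have h2 : Anc T root wac wab := by
    rw [e1, e2]
    refine hwcd.2.2 wac hwac.2.1 ?_
    rw [e3]; exact hwad.2.1
  have := anc_antisymm htree h2 h1
  rw [this, tab] at tac
  exact absurd tac (by decide)


open SplitAux RT in
lemma backward_dir {G : Type} [Fintype G] (hG : 3 ≤ Fintype.card G)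
    (R : G → G → Prop) (hirr : ∀ x, ¬ R x x) (hsym : ∀ x y, R x y → R y x)
    (hco : IsCograph (relGraph R)) :
    HasEventTree G 2 ![R, fun x y => x ≠ y ∧ ¬ R x y] := by
  classical
  have adjR : ∀ x y, (relGraph R).Adj x y ↔ R x y := by
    intro x y
    constructor
    · rintro ⟨hne, h | h⟩
      · exact h
      · exact hsym _ _ h
    · intro h
      exact ⟨fun he => hirr x (he ▸ h), Or.inl h⟩
  have hnp : ¬ P4In R (Finset.univ : Finset G) := by
    rintro ⟨a, b, c, d, _, _, _, _, hab, hac, had, hbc, hbd, hcd,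
      eab, ebc, ecd, nac, nad, nbd⟩
    exact hco ⟨a, b, c, d, hab, hac, had, hbc, hbd, hcd, (adjR _ _).mpr eab,
      (adjR _ _).mpr ebc, (adjR _ _).mpr ecd, fun h => nac ((adjR _ _).mp h),
      fun h => nad ((adjR _ _).mp h), fun h => nbd ((adjR _ _).mp h)⟩
  have hGne : Nonempty G := Fintype.card_pos_iff.mp (by omega)
  obtain ⟨tr, hnodup, htf, hspec⟩ := RT.build R hirr hsym (Fintype.card G) Finset.univ
    (le_of_eq (Finset.card_univ)) Finset.univ_nonempty hnp
  have htop : ∃ i l r, tr = RT.nd i l r := by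
    cases tr with
    | lf g =>
      exfalso
      have h1 := congrArg Finset.card htf
      simp only [RT.leaves, List.toFinset_cons, List.toFinset_nil,
        LawfulSingleton.insert_empty_eq, Finset.card_singleton, Finset.card_univ] at h1
      omega
    | nd i l r => exact ⟨i, l, r, rfl⟩
  have hmemg : ∀ g : G, g ∈ RT.leaves tr := by
    intro g
    rw [← List.mem_toFinset, htf]
    exact Finset.mem_univ g
  choose pos hpos using fun g => RT.exists_pos (hmemg g)
  set ι : G → RT.Vt tr := fun g => ⟨pos g, by simp [RT.Valid, hpos g]⟩ with hι
  set t : RT.Vt tr → Fin 2 := fun v =>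
    (match RT.subtreeAt tr v.val with
      | some (RT.nd i _ _) => i
      | _ => 0) with ht
  refine ⟨RT.Vt tr, RT.graph tr, RT.root tr, ι, t, RT.isTree tr, ?_, ?_, ?_⟩
  · -- injectivity
    intro g g' h
    have hvals : pos g = pos g' := congrArg Subtype.val h
    have h2 := hpos g'
    rw [← hvals, hpos g] at h2
    simpa using h2
  · -- leaves
    intro v
    rw [RT.isLeaf_iff htop v]
    constructor
    · rintro ⟨g, hg⟩
      exact ⟨g, Subtype.ext (RT.pos_unique hnodup (hpos g) hg)⟩
    · rintro ⟨g, rfl⟩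
      exact ⟨g, hpos g⟩
  · -- representation
    intro x y hxy w hw i
    have hval : w.val = RT.lcp (ι x).val (ι y).val := RT.isLCA_val hw
    obtain ⟨l', r', hsubw⟩ := hspec x y (pos x) (pos y) hxy (hpos x) (hpos y)
    have htw : t w = (if R x y then 0 else 1) := by
      show (match RT.subtreeAt tr w.val with
        | some (RT.nd i _ _) => i
        | _ => 0) = _
      rw [hval, hsubw]
    fin_cases i
    · simp only [Matrix.cons_val_zero]
      by_cases hR : R x y
      · simp [htw, hR]
      · simp [htw, hR]
    · simp only [Matrix.cons_val_one, Matrix.head_cons]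
      by_cases hR : R x y
      · simp [htw, hR]
      · simp [htw, hR, hxy]

/-- For an irreflexive symmetric relation `R` on `G` (`|G| ≥ 3`) and
its complementary relation `R'` (all pairs of distinct elements not in `R`), there is
an event-labeled tree representing `R, R'` iff the graph `G_R` is a cograph. -/
theorem stmt4 (G : Type) [Fintype G] (hG : 3 ≤ Fintype.card G)
    (R : G → G → Prop)
    (hirr : ∀ x, ¬ R x x)
    (hsym : ∀ x y, R x y → R y x) :
    HasEventTree G 2 ![R, fun x y => x ≠ y ∧ ¬ R x y] ↔ IsCograph (relGraph R) :=
  ⟨fun h => forward_dir R hirr hsym h, fun h => backward_dir hG R hirr hsym h⟩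
end

section
/- Let T be a rooted tree with leaf set G, let t be any map from the inner vertices of T to a set M, and let m ∈ M. Then the simple graph with vertex set G in which distinct x, y are adjacent if and only if t(lca(x,y)) = m contains no induced path on four vertices (i.e., it is a cograph). -/
section AuxTree

variable {V : Type} {T : SimpleGraph V} {root : V}

lemma path_eq (hT : T.IsTree) {v w : V} {p q : T.Walk v w} (hp : p.IsPath) (hq : q.IsPath) :
    p = q := by
  obtain ⟨r, -, hr⟩ := hT.existsUnique_path v w
  rw [hr p hp, hr q hq]

lemma anc_of_mem (hT : T.IsTree) {u v : V} {p : T.Walk v root} (hp : p.IsPath)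
    (hu : u ∈ p.support) : Anc T root u v := fun q hq => by
  rw [path_eq hT hq hp]; exact hu

lemma exists_path (hT : T.IsTree) (v w : V) : ∃ p : T.Walk v w, p.IsPath := by
  classical
  exact (hT.isConnected.preconnected v w).elim fun p => ⟨p.toPath.1, p.toPath.2⟩

lemma anc_trans (hT : T.IsTree) {u v w : V} (h1 : Anc T root u v) (h2 : Anc T root w u) :
    Anc T root w v := by
  classical
  intro p hp
  have hu := h1 p hp
  exact SimpleGraph.Walk.support_dropUntil_subset p hu (h2 (p.dropUntil u hu) (hp.dropUntil hu))

lemma anc_antisymm (hT : T.IsTree) {u v : V} (h1 : Anc T root u v) (h2 : Anc T root v u) :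
    u = v := by
  classical
  obtain ⟨p, hp⟩ := exists_path hT v root
  have hu := h1 p hp
  have hv := h2 (p.dropUntil u hu) (hp.dropUntil hu)
  rw [SimpleGraph.Walk.support_eq_cons, List.mem_cons] at hv
  rcases hv with h | hv
  · exact h.symm
  · exfalso
    have hnd : ((p.takeUntil u hu).support ++ (p.dropUntil u hu).support.tail).Nodup := by
      rw [← SimpleGraph.Walk.support_append, SimpleGraph.Walk.take_spec]
      exact hp.support_nodup
    obtain ⟨-, -, hdisj⟩ := List.nodup_append'.mp hnd
    exact hdisj (SimpleGraph.Walk.start_mem_support _) hv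

lemma anc_total (hT : T.IsTree) {v u w : V} {p : T.Walk v root} (hp : p.IsPath)
    (hu : u ∈ p.support) (hw : w ∈ p.support) : Anc T root u w ∨ Anc T root w u := by
  classical
  by_cases h : w ∈ (p.dropUntil u hu).support
  · right; exact anc_of_mem hT (hp.dropUntil hu) h
  · left
    have hw' : w ∈ (p.takeUntil u hu).support := by
      have hw2 := hw
      rw [← SimpleGraph.Walk.take_spec p hu, SimpleGraph.Walk.mem_support_append_iff] at hw2
      tauto
    have hnd : ((p.takeUntil u hu).support ++ (p.dropUntil u hu).support.tail).Nodup := by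
      rw [← SimpleGraph.Walk.support_append, SimpleGraph.Walk.take_spec]
      exact hp.support_nodup
    obtain ⟨-, h2, hdisj⟩ := List.nodup_append'.mp hnd
    have hqpath : (((p.takeUntil u hu).dropUntil w hw').append (p.dropUntil u hu)).IsPath := by
      rw [SimpleGraph.Walk.isPath_def, SimpleGraph.Walk.support_append, List.nodup_append']
      exact ⟨((hp.takeUntil hu).dropUntil hw').support_nodup, h2,
        fun a ha hb => hdisj (SimpleGraph.Walk.support_dropUntil_subset _ hw' ha) hb⟩
    refine anc_of_mem hT hqpath ?_
    rw [SimpleGraph.Walk.mem_support_append_iff]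
    exact Or.inl (SimpleGraph.Walk.end_mem_support _)

lemma firstCommon {w r v : V} (p : T.Walk v r) : ∀ (q : T.Walk w r),
    ∃ (c : V) (p₁ : T.Walk v c) (p₂ : T.Walk c r), p₁.append p₂ = p ∧ c ∈ q.support ∧
      ∀ u, u ∈ p.support → u ∈ q.support → u ∈ p₂.support := by
  classical
  induction p with
  | nil =>
    intro q
    exact ⟨_, .nil, .nil, rfl, q.end_mem_support, fun u hu _ => hu⟩
  | @cons a b _ h p' ih =>
    intro q
    by_cases hv : a ∈ q.support
    · exact ⟨a, .nil, .cons h p', rfl, hv, fun u hu _ => hu⟩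
    · obtain ⟨c, p₁, p₂, happ, hcq, hmin⟩ := ih q
      refine ⟨c, .cons h p₁, p₂, by rw [SimpleGraph.Walk.cons_append, happ], hcq,
        fun u hu huq => ?_⟩
      rw [SimpleGraph.Walk.support_cons, List.mem_cons] at hu
      rcases hu with rfl | hu
      · exact absurd huq hv
      · exact hmin u hu huq

lemma exists_isLCA (hT : T.IsTree) (x y : V) : ∃ c, IsLCA T root c x y := by
  obtain ⟨p, hp⟩ := exists_path hT x root
  obtain ⟨q, hq⟩ := exists_path hT y root
  obtain ⟨c, p₁, p₂, happ, hcq, hmin⟩ := firstCommon p q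
  have hp2 : p₂.IsPath := by
    rw [← happ] at hp; exact hp.of_append_right
  have hcp : c ∈ p.support := by
    rw [← happ, SimpleGraph.Walk.mem_support_append_iff]
    exact Or.inr p₂.start_mem_support
  exact ⟨c, anc_of_mem hT hp hcp, anc_of_mem hT hq hcq,
    fun u hux huy => anc_of_mem hT hp2 (hmin u (hux p hp) (huy q hq))⟩

lemma isLCA_symm {w x y : V} (h : IsLCA T root w x y) : IsLCA T root w y x :=
  ⟨h.2.1, h.1, fun u ha hb => h.2.2 u hb ha⟩

lemma lca_three_aux (hT : T.IsTree) {c1 c2 c3 x y z : V}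
    (h1 : IsLCA T root c1 x y) (h2 : IsLCA T root c2 x z) (h3 : IsLCA T root c3 y z)
    (h21 : Anc T root c2 c1) :
    (c1 = c2 ∧ Anc T root c1 c3) ∨ (c3 = c2 ∧ Anc T root c2 c1) := by
  by_cases heq : c1 = c2
  · refine Or.inl ⟨heq, h3.2.2 c1 h1.2.1 ?_⟩
    rw [heq]; exact h2.2.1
  · refine Or.inr ⟨?_, h21⟩
    have h23 : Anc T root c2 c3 := h3.2.2 c2 (anc_trans hT h1.2.1 h21) h2.2.1
    obtain ⟨py, hpy⟩ := exists_path hT y root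
    rcases anc_total hT hpy (h3.1 py hpy) (h1.2.1 py hpy) with h31 | h13
    · exact anc_antisymm hT (h2.2.2 c3 (anc_trans hT h1.1 h31) h3.2.1) h23
    · exact absurd (anc_antisymm hT (h2.2.2 c1 h1.1 (anc_trans hT h3.2.1 h13)) h21) heq

lemma lca_three (hT : T.IsTree) {c1 c2 c3 x y z : V}
    (h1 : IsLCA T root c1 x y) (h2 : IsLCA T root c2 x z) (h3 : IsLCA T root c3 y z) :
    (c1 = c2 ∧ Anc T root c1 c3) ∨ (c1 = c3 ∧ Anc T root c1 c2) ∨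
      (c2 = c3 ∧ Anc T root c2 c1) := by
  obtain ⟨px, hpx⟩ := exists_path hT x root
  rcases anc_total hT hpx (h1.1 px hpx) (h2.1 px hpx) with h12 | h21
  · rcases lca_three_aux hT h2 h1 (isLCA_symm h3) h12 with ⟨he, ha⟩ | ⟨he, ha⟩
    · exact Or.inl ⟨he.symm, he ▸ ha⟩
    · exact Or.inr (Or.inl ⟨he.symm, ha⟩)
  · rcases lca_three_aux hT h1 h2 h3 h21 with h | ⟨he, ha⟩
    · exact Or.inl h
    · exact Or.inr (Or.inr ⟨he.symm, ha⟩)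

end AuxTree

/-- For any rooted tree `T` with leaf set `G` (realized via the
injection `ι`), any labeling `t` of its (inner) vertices by a set `M`, and any
`m ∈ M`, the graph on `G` with distinct `x, y` adjacent iff `t (lca x y) = m` has no
induced path on four vertices, i.e. it is a cograph. -/
theorem stmt8 {G V M : Type} (T : SimpleGraph V) (root : V) (hT : T.IsTree)
    (ι : G → V) (hι : Function.Injective ι)
    (hleaves : ∀ v : V, IsLeaf T root v ↔ ∃ g : G, ι g = v)
    (t : V → M) (m : M) :
    IsCograph (relGraph (fun x y : G =>
      ∃ w : V, IsLCA T root w (ι x) (ι y) ∧ t w = m)) := by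
  rintro ⟨a, b, c, d, hab, hac, had, hbc, hbd, hcd, Eab, Ebc, Ecd, Nac, Nad, Nbd⟩
  -- witnesses for the adjacent pairs
  have getE : ∀ {x y : G}, (relGraph (fun x y : G =>
      ∃ w : V, IsLCA T root w (ι x) (ι y) ∧ t w = m)).Adj x y →
      ∃ w, IsLCA T root w (ι x) (ι y) ∧ t w = m := by
    rintro x y ⟨-, ⟨w, hw, hm⟩ | ⟨w, hw, hm⟩⟩
    · exact ⟨w, hw, hm⟩
    · exact ⟨w, isLCA_symm hw, hm⟩
  obtain ⟨wab, lab, tab⟩ := getE Eab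
  obtain ⟨wbc, lbc, tbc⟩ := getE Ebc
  obtain ⟨wcd, lcd, tcd⟩ := getE Ecd
  -- witnesses for the non-adjacent pairs
  obtain ⟨wac, lac⟩ := exists_isLCA hT (ι a) (ι c)
  obtain ⟨wad, lad⟩ := exists_isLCA hT (ι a) (ι d)
  obtain ⟨wbd, lbd⟩ := exists_isLCA hT (ι b) (ι d)
  have tac : t wac ≠ m := fun hm => Nac ⟨hac, Or.inl ⟨wac, lac, hm⟩⟩
  have tad : t wad ≠ m := fun hm => Nad ⟨had, Or.inl ⟨wad, lad, hm⟩⟩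
  have tbd : t wbd ≠ m := fun hm => Nbd ⟨hbd, Or.inl ⟨wbd, lbd, hm⟩⟩
  -- three applications of the three-point lemma
  have h1 : Anc T root wab wac := by
    rcases lca_three hT (isLCA_symm lab) lbc lac with ⟨-, h⟩ | ⟨he, -⟩ | ⟨he, -⟩
    · exact h
    · exact absurd (he ▸ tab) tac
    · exact absurd (he ▸ tbc) tac
  have e3 : wac = wad := by
    rcases lca_three hT lac lad lcd with ⟨he, -⟩ | ⟨he, -⟩ | ⟨he, -⟩
    · exact he
    · exact absurd tcd (he ▸ tac)
    · exact absurd tcd (he ▸ tad)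
  have h4 : Anc T root wad wab := by
    rcases lca_three hT (isLCA_symm lad) (isLCA_symm lbd) lab with ⟨-, h⟩ | ⟨he, -⟩ | ⟨he, -⟩
    · exact h
    · exact absurd tab (he ▸ tad)
    · exact absurd tab (he ▸ tbd)
  have heq : wab = wad := anc_antisymm hT (e3 ▸ h1) h4
  exact tad (by rw [← heq]; exact tab)
end
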